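/- Let G be a universally signable graph (i.e., a graph containing no theta, pyramid, prism, or wheel as an induced subgraph), let C be an induced cycle of G of length greater than three, and let u, v be two non-adjacent vertices of C. Then every induced path between u and v in G has all its vertices contained in V(C). -/

import Mathlib

open SimpleGraph

namespace Paper

variable {V : Type}

/-- `u` and `v` are connected in `G` after deleting the vertex set `B`. -/
def ConnOutside (G : SimpleGraph V) (B : Set V) (u v : V) : Prop :=
  ∃ (hu : u ∈ Bᶜ) (hv : v ∈ Bᶜ), (G.induce Bᶜ).Reachable ⟨u, hu⟩ ⟨v, hv⟩

/-- `C` is an `(a,b)`-cutset of `G`. -/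
def IsSep (G : SimpleGraph V) (a b : V) (C : Set V) : Prop :=
  a ∉ C ∧ b ∉ C ∧ ¬ ConnOutside G C a b

/-- `C` is a minimal `(a,b)`-cutset of `G`. -/
def IsMinSep (G : SimpleGraph V) (a b : V) (C : Set V) : Prop :=
  IsSep G a b C ∧ ∀ C' ⊂ C, ¬ IsSep G a b C'

/-- `S` is a cluster of the layering partition of `G` rooted at `r`, at level `k`:
a maximal set of vertices at distance exactly `k` from `r`, any two of which are
connected in `G` minus the ball of radius `k-1` around `r`. -/
def IsCluster (G : SimpleGraph V) (r : V) (k : ℕ) (S : Set V) : Prop :=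
  S.Nonempty ∧ (∀ v ∈ S, G.dist r v = k) ∧
  (∀ u ∈ S, ∀ v ∈ S, ConnOutside G {w | G.dist r w < k} u v) ∧
  ∀ S', S ⊆ S' → (∀ v ∈ S', G.dist r v = k) →
    (∀ u ∈ S', ∀ v ∈ S', ConnOutside G {w | G.dist r w < k} u v) → S' ⊆ S

/-- The parent set of a cluster `S` at level `k`: vertices at distance `k-1` from `r`
adjacent to some vertex of `S`. -/
def parentSet (G : SimpleGraph V) (r : V) (k : ℕ) (S : Set V) : Set V :=
  {v | G.dist r v = k - 1 ∧ ∃ u ∈ S, G.Adj v u}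

/-- `G` has no `K_{2,3}` induced minor. -/
def K23Free (G : SimpleGraph V) : Prop :=
  ¬ ∃ φ : Fin 2 ⊕ Fin 3 → Set V,
      (∀ w, (φ w).Nonempty) ∧ (∀ w, (G.induce (φ w)).Connected) ∧
      (Pairwise fun a b => Disjoint (φ a) (φ b)) ∧
      (∀ a b, a ≠ b →
        ((completeBipartiteGraph (Fin 2) (Fin 3)).Adj a b ↔
          ∃ u ∈ φ a, ∃ v ∈ φ b, G.Adj u v))

/-- `G` contains a theta as an induced subgraph. -/
def HasTheta (G : SimpleGraph V) : Prop :=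
  ∃ (a b : V) (p₁ p₂ p₃ : G.Walk a b),
    p₁.IsPath ∧ p₂.IsPath ∧ p₃.IsPath ∧
    2 ≤ p₁.length ∧ 2 ≤ p₂.length ∧ 2 ≤ p₃.length ∧
    (∀ v, v ∈ p₁.support → v ∈ p₂.support → v = a ∨ v = b) ∧
    (∀ v, v ∈ p₁.support → v ∈ p₃.support → v = a ∨ v = b) ∧
    (∀ v, v ∈ p₂.support → v ∈ p₃.support → v = a ∨ v = b) ∧
    ∀ u v, u ∈ p₁.support ++ p₂.support ++ p₃.support →
      v ∈ p₁.support ++ p₂.support ++ p₃.support →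
      (G.Adj u v ↔ s(u, v) ∈ p₁.edges ++ p₂.edges ++ p₃.edges)

/-- `G` contains a pyramid as an induced subgraph. -/
def HasPyramid (G : SimpleGraph V) : Prop :=
  ∃ (a b₁ b₂ b₃ : V) (p₁ : G.Walk a b₁) (p₂ : G.Walk a b₂) (p₃ : G.Walk a b₃),
    p₁.IsPath ∧ p₂.IsPath ∧ p₃.IsPath ∧
    G.Adj b₁ b₂ ∧ G.Adj b₂ b₃ ∧ G.Adj b₁ b₃ ∧
    1 ≤ p₁.length ∧ 1 ≤ p₂.length ∧ 1 ≤ p₃.length ∧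
    ((2 ≤ p₁.length ∧ 2 ≤ p₂.length) ∨ (2 ≤ p₁.length ∧ 2 ≤ p₃.length) ∨
      (2 ≤ p₂.length ∧ 2 ≤ p₃.length)) ∧
    (∀ v, v ∈ p₁.support → v ∈ p₂.support → v = a) ∧
    (∀ v, v ∈ p₁.support → v ∈ p₃.support → v = a) ∧
    (∀ v, v ∈ p₂.support → v ∈ p₃.support → v = a) ∧
    ∀ u v, u ∈ p₁.support ++ p₂.support ++ p₃.support →
      v ∈ p₁.support ++ p₂.support ++ p₃.support →
      (G.Adj u v ↔ s(u, v) ∈ p₁.edges ++ p₂.edges ++ p₃.edges ∨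
        s(u, v) ∈ [s(b₁, b₂), s(b₂, b₃), s(b₁, b₃)])

/-- The common part of the definition of an (induced) prism in `G`. -/
def PrismWitness (G : SimpleGraph V) (a₁ a₂ a₃ b₁ b₂ b₃ : V)
    (p₁ : G.Walk a₁ b₁) (p₂ : G.Walk a₂ b₂) (p₃ : G.Walk a₃ b₃) : Prop :=
  p₁.IsPath ∧ p₂.IsPath ∧ p₃.IsPath ∧
  G.Adj a₁ a₂ ∧ G.Adj a₂ a₃ ∧ G.Adj a₁ a₃ ∧
  G.Adj b₁ b₂ ∧ G.Adj b₂ b₃ ∧ G.Adj b₁ b₃ ∧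
  (∀ v, v ∈ p₁.support → v ∉ p₂.support) ∧
  (∀ v, v ∈ p₁.support → v ∉ p₃.support) ∧
  (∀ v, v ∈ p₂.support → v ∉ p₃.support) ∧
  ∀ u v, u ∈ p₁.support ++ p₂.support ++ p₃.support →
    v ∈ p₁.support ++ p₂.support ++ p₃.support →
    (G.Adj u v ↔ s(u, v) ∈ p₁.edges ++ p₂.edges ++ p₃.edges ∨
      s(u, v) ∈ [s(a₁, a₂), s(a₂, a₃), s(a₁, a₃), s(b₁, b₂), s(b₂, b₃), s(b₁, b₃)])

/-- `G` contains a prism as an induced subgraph. -/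
def HasPrism (G : SimpleGraph V) : Prop :=
  ∃ (a₁ a₂ a₃ b₁ b₂ b₃ : V) (p₁ : G.Walk a₁ b₁) (p₂ : G.Walk a₂ b₂) (p₃ : G.Walk a₃ b₃),
    PrismWitness G a₁ a₂ a₃ b₁ b₂ b₃ p₁ p₂ p₃

/-- `G` contains a long prism (at least one path of length ≥ 2) as an induced subgraph. -/
def HasLongPrism (G : SimpleGraph V) : Prop :=
  ∃ (a₁ a₂ a₃ b₁ b₂ b₃ : V) (p₁ : G.Walk a₁ b₁) (p₂ : G.Walk a₂ b₂) (p₃ : G.Walk a₃ b₃),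
    PrismWitness G a₁ a₂ a₃ b₁ b₂ b₃ p₁ p₂ p₃ ∧
    (2 ≤ p₁.length ∨ 2 ≤ p₂.length ∨ 2 ≤ p₃.length)

/-- `c` is an induced cycle (hole when length ≥ 4) of `G`. -/
def IsInducedCycle (G : SimpleGraph V) {v : V} (c : G.Walk v v) : Prop :=
  c.IsCycle ∧ ∀ x ∈ c.support, ∀ y ∈ c.support, (G.Adj x y ↔ s(x, y) ∈ c.edges)

/-- `p` is an induced path of `G`. -/
def IsInducedPath (G : SimpleGraph V) {a b : V} (p : G.Walk a b) : Prop :=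
  p.IsPath ∧ ∀ u ∈ p.support, ∀ v ∈ p.support, (G.Adj u v ↔ s(u, v) ∈ p.edges)

/-- `G` contains a wheel: a hole together with a vertex having ≥ 3 neighbours on it. -/
def HasWheel (G : SimpleGraph V) : Prop :=
  ∃ (v x : V) (c : G.Walk v v), IsInducedCycle G c ∧ 4 ≤ c.length ∧ x ∉ c.support ∧
    ∃ y₁ y₂ y₃, y₁ ≠ y₂ ∧ y₁ ≠ y₃ ∧ y₂ ≠ y₃ ∧
      y₁ ∈ c.support ∧ y₂ ∈ c.support ∧ y₃ ∈ c.support ∧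
      G.Adj x y₁ ∧ G.Adj x y₂ ∧ G.Adj x y₃

/-- A sector of a wheel with rim `c` and centre `x`: a path contained in the rim whose
end-vertices are neighbours of `x` and whose internal vertices are not. -/
def IsSector (G : SimpleGraph V) {v : V} (c : G.Walk v v) (x : V) {s t : V}
    (q : G.Walk s t) : Prop :=
  q.IsPath ∧ (∀ e ∈ q.edges, e ∈ c.edges) ∧ G.Adj x s ∧ G.Adj x t ∧
  ∀ w ∈ q.support, w ≠ s → w ≠ t → ¬ G.Adj x w

/-- `G` contains a broken wheel: a wheel with at least two sectors of length ≥ 2. -/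
def HasBrokenWheel (G : SimpleGraph V) : Prop :=
  ∃ (v x : V) (c : G.Walk v v), IsInducedCycle G c ∧ 4 ≤ c.length ∧ x ∉ c.support ∧
    (∃ y₁ y₂ y₃, y₁ ≠ y₂ ∧ y₁ ≠ y₃ ∧ y₂ ≠ y₃ ∧
      y₁ ∈ c.support ∧ y₂ ∈ c.support ∧ y₃ ∈ c.support ∧
      G.Adj x y₁ ∧ G.Adj x y₂ ∧ G.Adj x y₃) ∧
    ∃ (s₁ t₁ s₂ t₂ : V) (q₁ : G.Walk s₁ t₁) (q₂ : G.Walk s₂ t₂),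
      IsSector G c x q₁ ∧ IsSector G c x q₂ ∧ 2 ≤ q₁.length ∧ 2 ≤ q₂.length ∧
      ∀ w, w ∈ q₁.support → w ∈ q₂.support → G.Adj x w

/-- A universally signable graph: no theta, pyramid, prism, or wheel induced subgraph. -/
def UniversallySignable (G : SimpleGraph V) : Prop :=
  ¬ HasTheta G ∧ ¬ HasPyramid G ∧ ¬ HasPrism G ∧ ¬ HasWheel G

/-- `G` has tree-width at most `w`. -/
def TreewidthLe (G : SimpleGraph V) (w : ℕ) : Prop :=
  ∃ (ι : Type) (T : SimpleGraph ι) (bag : ι → Set V),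
    T.IsTree ∧
    (∀ v, ∃ i, v ∈ bag i) ∧
    (∀ u v, G.Adj u v → ∃ i, u ∈ bag i ∧ v ∈ bag i) ∧
    (∀ v, (T.induce {i | v ∈ bag i}).Connected) ∧
    (∀ i, (bag i).ncard ≤ w + 1)

/-- The strong isometric path complexity of `G` is at most `s`: for every vertex `v`,
every isometric path of `G` can be vertex-covered by at most `s` isometric paths
rooted at `v`. -/
def SipcoLe (G : SimpleGraph V) (s : ℕ) : Prop :=
  ∀ v : V, ∀ ⦃x y : V⦄ (p : G.Walk x y), p.length = G.dist x y →
    ∃ n : ℕ, n ≤ s ∧ ∃ (e : Fin n → V) (Q : ∀ i, G.Walk v (e i)),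
      (∀ i, (Q i).length = G.dist v (e i)) ∧
      ∀ z ∈ p.support, ∃ i, z ∈ (Q i).support

/-- The strong isometric path complexity of `G`. -/
noncomputable def sipco (G : SimpleGraph V) : ℕ := sInf {s | SipcoLe G s}

/-- `P` induces exactly two connected components `C₁`, `C₂` in `G`. -/
def SplitsTwo (G : SimpleGraph V) (P C₁ C₂ : Set V) : Prop :=
  C₁ ∪ C₂ = P ∧ Disjoint C₁ C₂ ∧ C₁.Nonempty ∧ C₂.Nonempty ∧
  (G.induce C₁).Connected ∧ (G.induce C₂).Connected ∧
  ∀ u ∈ C₁, ∀ v ∈ C₂, ¬ G.Adj u v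

/-- The star of edges joining each vertex of `D` to `w`. -/
def starEdges (w : V) (D : Set V) : Set (Sym2 V) := {e | ∃ v ∈ D, e = s(v, w)}

/-- Vertices of `S` with a `G`-neighbour in `C`. -/
def Dset (G : SimpleGraph V) (S C : Set V) : Set V := {u ∈ S | ∃ v ∈ C, G.Adj u v}

/-- Admissible edge sets `E` produced by Algorithm 1 when processing a cluster `S`
with parent set `P`. -/
def ClusterEdges (G : SimpleGraph V) (S P : Set V) (E : Set (Sym2 V)) : Prop :=
  ((G.induce P).Connected ∧ ∃ w ∈ P, E = starEdges w S) ∨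
  ∃ C₁ C₂, SplitsTwo G P C₁ C₂ ∧ ∃ w₁ ∈ C₁, ∃ w₂ ∈ C₂,
    ((Dset G S C₁ ∩ Dset G S C₂ = ∅ ∧
       ((¬ (∃ u ∈ Dset G S C₁, ∃ v ∈ Dset G S C₂, G.Adj u v) ∧
          E = starEdges w₁ (Dset G S C₁) ∪ starEdges w₂ (Dset G S C₂)) ∨
        (∃ u ∈ Dset G S C₁, ∃ v ∈ Dset G S C₂, G.Adj u v ∧
          E = starEdges w₁ (Dset G S C₁) ∪ starEdges w₂ (Dset G S C₂) ∪ {s(u, v)})))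
     ∨
     ((Dset G S C₁ ∩ Dset G S C₂).Nonempty ∧
       ∃ u ∈ Dset G S C₁ ∩ Dset G S C₂,
         E = starEdges w₁ (Dset G S C₁) ∪
             starEdges w₂ (Dset G S C₂ \ Dset G S C₁) ∪ {s(u, w₂)}))

/-- `H` is a possible output of the cluster-rewiring algorithm (Algorithm 1) on `(G, r)`. -/
def IsAlgoOutput (G : SimpleGraph V) (r : V) (H : SimpleGraph V) : Prop :=
  ∃ f : Set V → Set (Sym2 V),
    (∀ S k, 1 ≤ k → IsCluster G r k S → ClusterEdges G S (parentSet G r k S) (f S)) ∧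
    H.edgeSet = ⋃ S ∈ {S : Set V | ∃ k, 1 ≤ k ∧ IsCluster G r k S}, f S

/-- The type of clusters of the layering partition of `G` rooted at `r`. -/
def ClusterType (G : SimpleGraph V) (r : V) : Type := {S : Set V // ∃ k, IsCluster G r k S}

/-- The layering tree: clusters, adjacent when `G` has an edge between them. -/
def layeringTree (G : SimpleGraph V) (r : V) : SimpleGraph (ClusterType G r) :=
  SimpleGraph.fromRel (fun S T => ∃ u ∈ S.1, ∃ v ∈ T.1, G.Adj u v)

/-- `A` is a connected component of `G - C`. -/
def IsCompOf (G : SimpleGraph V) (C A : Set V) : Prop :=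
  A.Nonempty ∧ Disjoint A C ∧ (G.induce A).Connected ∧
  ∀ u ∈ A, ∀ v, v ∉ A → v ∉ C → ¬ G.Adj u v


/-! ### Auxiliary infrastructure -/

section Aux

variable {G : SimpleGraph V}

lemma one_le_length_of_ne' {u v : V} (h : u ≠ v) (p : G.Walk u v) : 1 ≤ p.length := by
  cases p with
  | nil => exact absurd rfl h
  | cons h' q => simp only [Walk.length_cons]; omega

lemma two_le_length_of_not_adj' {u v : V} (hne : u ≠ v) (hna : ¬ G.Adj u v) (p : G.Walk u v) :
    2 ≤ p.length := by
  match p with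
  | .nil => exact absurd rfl hne
  | .cons h .nil => exact absurd h hna
  | .cons h (.cons h' q) => simp only [Walk.length_cons]; omega

lemma support_edges_of_length_one {u v : V} {p : G.Walk u v} (h : p.length = 1) :
    p.support = [u, v] ∧ p.edges = [s(u, v)] := by
  match p with
  | .nil => simp at h
  | .cons h' q =>
    have hq : q.length = 0 := by simp only [Walk.length_cons] at h; omega
    cases q with
    | nil => simp
    | cons _ _ => simp at hq

lemma edge_start_eq {u v x : V} {p : G.Walk u v} (hp : p.IsPath) (hx : s(u, x) ∈ p.edges) :
    ∃ (h : G.Adj u x) (q : G.Walk x v), p = Walk.cons h q := by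
  match p with
  | .nil => simp at hx
  | .cons h' q =>
    rw [Walk.edges_cons, List.mem_cons] at hx
    rcases hx with hx | hx
    · rw [Sym2.eq_iff] at hx
      rcases hx with ⟨-, rfl⟩ | ⟨h1, rfl⟩
      · exact ⟨h', q, rfl⟩
      · exact absurd h1 h'.ne
    · exact absurd (Walk.fst_mem_support_of_mem_edges q hx)
        ((Walk.cons_isPath_iff _ _).mp hp).2

lemma length_eq_one_of_ends_edge {u v : V} {p : G.Walk u v} (hp : p.IsPath)
    (h : s(u, v) ∈ p.edges) : p.length = 1 := by
  obtain ⟨h', q, rfl⟩ := edge_start_eq hp h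
  have hq : q = Walk.nil := Walk.isPath_iff_eq_nil.mp ((Walk.cons_isPath_iff _ _).mp hp).1
  subst hq; simp

lemma eq_mid_of_mem_inter {u v w x : V} {p : G.Walk u v} {q : G.Walk v w}
    (h : (p.append q).IsPath) (h1 : x ∈ p.support) (h2 : x ∈ q.support) : x = v := by
  have hn := h.support_nodup
  rw [Walk.support_append] at hn
  rcases List.nodup_append.mp hn with ⟨-, -, hdisj⟩
  by_contra hne
  have h2' : x ∈ q.support.tail := by
    have := q.support_eq_cons
    rw [this, List.mem_cons] at h2
    exact h2.resolve_left hne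
  exact hdisj x h1 x h2' rfl

lemma IsInducedPath.of_append_right' {u v w : V} {p : G.Walk u v} {q : G.Walk v w}
    (h : IsInducedPath G (p.append q)) : IsInducedPath G q := by
  obtain ⟨hp, hind⟩ := h
  refine ⟨hp.of_append_right, fun x hx y hy => ⟨fun hadj => ?_, fun he => q.adj_of_mem_edges he⟩⟩
  have hmem : ∀ z ∈ q.support, z ∈ (p.append q).support :=
    fun z hz => Walk.subset_support_append_right p q hz
  have h' := (hind x (hmem x hx) y (hmem y hy)).mp hadj
  rw [Walk.edges_append, List.mem_append] at h'
  rcases h' with h' | h'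
  · have hxv := eq_mid_of_mem_inter hp (Walk.fst_mem_support_of_mem_edges p h') hx
    have hyv := eq_mid_of_mem_inter hp (Walk.snd_mem_support_of_mem_edges p h') hy
    exact absurd (hxv.trans hyv.symm) hadj.ne
  · exact h'

lemma IsInducedPath.of_append_left' {u v w : V} {p : G.Walk u v} {q : G.Walk v w}
    (h : IsInducedPath G (p.append q)) : IsInducedPath G p := by
  obtain ⟨hp, hind⟩ := h
  refine ⟨hp.of_append_left, fun x hx y hy => ⟨fun hadj => ?_, fun he => p.adj_of_mem_edges he⟩⟩
  have hmem : ∀ z ∈ p.support, z ∈ (p.append q).support :=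
    fun z hz => Walk.subset_support_append_left p q hz
  have h' := (hind x (hmem x hx) y (hmem y hy)).mp hadj
  rw [Walk.edges_append, List.mem_append] at h'
  rcases h' with h' | h'
  · exact h'
  · have hxv := eq_mid_of_mem_inter hp hx (Walk.fst_mem_support_of_mem_edges q h')
    have hyv := eq_mid_of_mem_inter hp hy (Walk.snd_mem_support_of_mem_edges q h')
    exact absurd (hxv.trans hyv.symm) hadj.ne

lemma IsInducedPath.reverse' {u v : V} {p : G.Walk u v} (h : IsInducedPath G p) :
    IsInducedPath G p.reverse := by
  refine ⟨h.1.reverse, fun x hx y hy => ?_⟩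
  rw [Walk.support_reverse, List.mem_reverse] at hx hy
  rw [Walk.edges_reverse, List.mem_reverse]
  exact h.2 x hx y hy

end Aux


section Aux2

variable {G : SimpleGraph V}

lemma firstHit {s t : V} (w : G.Walk s t) (Q : V → Prop) (h : ∃ y ∈ w.support, Q y) :
    ∃ (z : V) (w₁ : G.Walk s z) (w₂ : G.Walk z t), w = w₁.append w₂ ∧ Q z ∧
      ∀ v ∈ w₁.support, v ≠ z → ¬ Q v := by
  induction w with
  | nil =>
    refine ⟨_, .nil, .nil, rfl, ?_, ?_⟩
    · simpa using h
    · intro v hv hne; simp at hv; exact absurd hv hne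
  | @cons u x t' h' p ih =>
    by_cases hQu : Q u
    · exact ⟨u, .nil, .cons h' p, rfl, hQu, by intro v hv hne; simp at hv; exact absurd hv hne⟩
    · obtain ⟨y, hy, hQy⟩ := h
      rw [Walk.support_cons, List.mem_cons] at hy
      rcases hy with rfl | hy
      · exact absurd hQy hQu
      · obtain ⟨z, w₁, w₂, heq, hQz, hw⟩ := ih ⟨y, hy, hQy⟩
        refine ⟨z, .cons h' w₁, w₂, by rw [Walk.cons_append, heq], hQz, ?_⟩
        intro v hv hne
        rw [Walk.support_cons, List.mem_cons] at hv
        rcases hv with rfl | hv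
        · exact hQu
        · exact hw v hv hne

lemma segment_startP {s t : V} (w : G.Walk s t) (P Q : V → Prop)
    (hPs : P s) (hQ : ∃ y ∈ w.support, Q y) :
    ∃ (x y : V) (pre : G.Walk s x) (mid : G.Walk x y) (post : G.Walk y t),
      w = pre.append (mid.append post) ∧ P x ∧ Q y ∧
      ∀ v ∈ mid.support, (P v ∨ Q v) → v = x ∨ v = y := by
  obtain ⟨z, w₁, w₂, heq, hQz, hnQ⟩ := firstHit w Q hQ
  obtain ⟨x, u₁, u₂, heq₂, hPx, hnP⟩ := firstHit w₁.reverse P ⟨s, by simp, hPs⟩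
  refine ⟨x, z, u₂.reverse, u₁.reverse, w₂, ?_, hPx, hQz, ?_⟩
  · have hw₁ : w₁ = u₂.reverse.append u₁.reverse := by
      rw [← Walk.reverse_append, ← heq₂, Walk.reverse_reverse]
    rw [heq, hw₁, Walk.append_assoc]
  · intro v hv hpq
    rw [Walk.support_reverse, List.mem_reverse] at hv
    rcases hpq with hp | hq
    · rcases eq_or_ne v x with h | h
      · exact Or.inl h
      · exact absurd hp (hnP v hv h)
    · rcases eq_or_ne v z with h | h
      · exact Or.inr h
      · refine absurd hq (hnQ v ?_ h)
        have : v ∈ w₁.reverse.support := by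
          rw [heq₂]; exact Walk.subset_support_append_left u₁ u₂ hv
        rwa [Walk.support_reverse, List.mem_reverse] at this

lemma exists_segment {s t : V} (w : G.Walk s t) (P Q : V → Prop)
    (disj : ∀ v ∈ w.support, ¬(P v ∧ Q v))
    (hP : ∃ x ∈ w.support, P x) (hQ : ∃ y ∈ w.support, Q y) :
    ∃ (x y : V) (pre : G.Walk s x) (mid : G.Walk x y) (post : G.Walk y t),
      w = pre.append (mid.append post) ∧ ((P x ∧ Q y) ∨ (Q x ∧ P y)) ∧
      ∀ v ∈ mid.support, (P v ∨ Q v) → v = x ∨ v = y := by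
  induction w with
  | nil =>
    obtain ⟨x, hx, hPx⟩ := hP
    obtain ⟨y, hy, hQy⟩ := hQ
    simp only [Walk.support_nil, List.mem_singleton] at hx hy
    subst hx; subst hy
    exact absurd ⟨hPx, hQy⟩ (disj _ (by simp))
  | @cons u x t' h' p ih =>
    by_cases hPu : P u
    · obtain ⟨a, b, pre, mid, post, heq, h1, h2, h3⟩ :=
        segment_startP (Walk.cons h' p) P Q hPu hQ
      exact ⟨a, b, pre, mid, post, heq, Or.inl ⟨h1, h2⟩, h3⟩
    · by_cases hQu : Q u
      · obtain ⟨a, b, pre, mid, post, heq, h1, h2, h3⟩ :=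
          segment_startP (Walk.cons h' p) Q P hQu hP
        exact ⟨a, b, pre, mid, post, heq, Or.inr ⟨h1, h2⟩,
          fun v hv hpq => h3 v hv hpq.symm⟩
      · obtain ⟨a, ha, hPa⟩ := hP
        obtain ⟨b, hb, hQb⟩ := hQ
        rw [Walk.support_cons, List.mem_cons] at ha hb
        rcases ha with rfl | ha
        · exact absurd hPa hPu
        rcases hb with rfl | hb
        · exact absurd hQb hQu
        obtain ⟨a', b', pre, mid, post, heq, h1, h2⟩ :=
          ih (fun v hv => disj v (by rw [Walk.support_cons]; exact List.mem_cons_of_mem _ hv))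
            ⟨a, ha, hPa⟩ ⟨b, hb, hQb⟩
        exact ⟨a', b', .cons h' pre, mid, post, by rw [Walk.cons_append, heq], h1, h2⟩

end Aux2


section Aux3

variable {G : SimpleGraph V} [DecidableEq V]

lemma start_mem_support_tail {v : V} (c : G.Walk v v) (hnil : ¬ c.Nil) :
    v ∈ c.support.tail := by
  cases c with
  | nil => simp at hnil
  | cons h p => simpa using p.end_mem_support

lemma closed_mem_support_iff_tail {v z : V} {c : G.Walk v v} (hnil : ¬ c.Nil) :
    z ∈ c.support ↔ z ∈ c.support.tail := by
  constructor
  · intro h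
    rw [c.support_eq_cons, List.mem_cons] at h
    rcases h with rfl | h
    · exact start_mem_support_tail c hnil
    · exact h
  · intro h
    rw [c.support_eq_cons]
    exact List.mem_cons_of_mem _ h

lemma length_rotate' {u v : V} (c : G.Walk v v) (hu : u ∈ c.support) :
    (c.rotate u hu).length = c.length := by
  have h1 := congrArg Walk.length (c.take_spec hu)
  rw [Walk.length_append] at h1
  rw [Walk.rotate, Walk.length_append]
  omega

lemma mem_support_rotate_iff {u v z : V} (c : G.Walk v v) (hnil : ¬ c.Nil)
    (hu : u ∈ c.support) : z ∈ (c.rotate u hu).support ↔ z ∈ c.support := by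
  have hnil' : ¬ (c.rotate u hu).Nil := by
    rw [Walk.nil_iff_length_eq, length_rotate']
    rwa [Walk.nil_iff_length_eq] at hnil
  rw [closed_mem_support_iff_tail hnil', closed_mem_support_iff_tail hnil]
  exact (Walk.support_rotate c u hu).mem_iff

lemma split_cycle {v x y : V} {c : G.Walk v v} (hc : c.IsCycle) (hx : x ∈ c.support)
    (hy : y ∈ c.support) (hxy : x ≠ y) :
    ∃ (P₁ P₂ : G.Walk x y), P₁.IsPath ∧ P₂.IsPath ∧
      (∀ z, z ∈ P₁.support → z ∈ P₂.support → z = x ∨ z = y) ∧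
      (∀ z, z ∈ c.support ↔ (z ∈ P₁.support ∨ z ∈ P₂.support)) ∧
      (∀ e, e ∈ c.edges ↔ (e ∈ P₁.edges ∨ e ∈ P₂.edges)) ∧
      P₁.length + P₂.length = c.length := by
  have hnil : ¬ c.Nil := hc.not_nil
  have hcyc₂ : (c.rotate x hx).IsCycle := Walk.IsCycle.rotate hx hc
  have hy₂ : y ∈ (c.rotate x hx).support := (mem_support_rotate_iff c hnil hx).mpr hy
  set c₂ := c.rotate x hx with hc₂def
  set T := c₂.takeUntil y hy₂ with hT
  set D := c₂.dropUntil y hy₂ with hD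
  have hspec : T.append D = c₂ := c₂.take_spec hy₂
  have hsup : c₂.support = T.support ++ D.support.tail := by
    rw [← hspec, Walk.support_append]
  have htail : c₂.support.tail = T.support.tail ++ D.support.tail := by
    conv_lhs => rw [hsup, T.support_eq_cons, List.cons_append, List.tail_cons]
  have hnd : (T.support.tail ++ D.support.tail).Nodup := htail ▸ hcyc₂.support_nodup
  obtain ⟨hnd₁, hnd₂, hdisj⟩ := List.nodup_append.mp hnd
  have hxD : x ∈ D.support.tail := Walk.end_mem_tail_support_of_ne hxy.symm D
  have hyT : y ∈ T.support.tail := Walk.end_mem_tail_support_of_ne hxy T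
  have hTpath : T.IsPath := by
    rw [Walk.isPath_def, T.support_eq_cons, List.nodup_cons]
    exact ⟨fun h => hdisj x h x hxD rfl, hnd₁⟩
  have hDpath : D.IsPath := by
    rw [Walk.isPath_def, D.support_eq_cons, List.nodup_cons]
    exact ⟨fun h => hdisj y hyT y h rfl, hnd₂⟩
  refine ⟨T, D.reverse, hTpath, hDpath.reverse, ?_, ?_, ?_, ?_⟩
  · intro z h1 h2
    rw [Walk.support_reverse, List.mem_reverse] at h2
    rw [T.support_eq_cons, List.mem_cons] at h1
    rw [D.support_eq_cons, List.mem_cons] at h2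
    rcases h1 with rfl | h1
    · exact Or.inl rfl
    rcases h2 with rfl | h2
    · exact Or.inr rfl
    exact absurd rfl (hdisj z h1 z h2)
  · intro z
    rw [← mem_support_rotate_iff c hnil hx, ← hc₂def,
      Walk.support_reverse, List.mem_reverse]
    constructor
    · intro h
      rw [hsup, List.mem_append] at h
      rcases h with h | h
      · exact Or.inl h
      · exact Or.inr (List.tail_subset _ h)
    · rintro (h | h)
      · exact Walk.support_takeUntil_subset c₂ hy₂ h
      · exact Walk.support_dropUntil_subset c₂ hy₂ h
  · intro e
    have h1 : e ∈ c.edges ↔ e ∈ c₂.edges := (Walk.rotate_edges c x hx).mem_iff.symm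
    rw [h1, ← hspec, Walk.edges_append, List.mem_append,
      Walk.edges_reverse, List.mem_reverse]
  · have h2 := congrArg Walk.length hspec
    rw [Walk.length_append] at h2
    rw [Walk.length_reverse, h2, hc₂def, length_rotate']

end Aux3


section Aux4

variable {G : SimpleGraph V} [DecidableEq V] {v : V} {c : G.Walk v v}

lemma no_three_nbrs (hG : UniversallySignable G) (hc : IsInducedCycle G c)
    (hlen : 3 < c.length) {x y₁ y₂ y₃ : V} (hx : x ∉ c.support)
    (h₁ : y₁ ∈ c.support) (h₂ : y₂ ∈ c.support) (h₃ : y₃ ∈ c.support)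
    (hne₁₂ : y₁ ≠ y₂) (hne₁₃ : y₁ ≠ y₃) (hne₂₃ : y₂ ≠ y₃)
    (ha₁ : G.Adj x y₁) (ha₂ : G.Adj x y₂) (ha₃ : G.Adj x y₃) : False :=
  hG.2.2.2 ⟨v, x, c, hc, by omega, hx, y₁, y₂, y₃, hne₁₂, hne₁₃, hne₂₃,
    h₁, h₂, h₃, ha₁, ha₂, ha₃⟩

lemma no_two_nonadj (hG : UniversallySignable G) (hc : IsInducedCycle G c)
    (hlen : 3 < c.length) {x y z : V} (hx : x ∉ c.support)
    (hy : y ∈ c.support) (hz : z ∈ c.support) (hyz : y ≠ z) (hna : ¬ G.Adj y z)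
    (h₁ : G.Adj x y) (h₂ : G.Adj x z) : False := by
  have hxy : x ≠ y := fun h => hx (h ▸ hy)
  have hxz : x ≠ z := fun h => hx (h ▸ hz)
  by_cases h3 : ∃ t ∈ c.support, t ≠ y ∧ t ≠ z ∧ G.Adj x t
  · obtain ⟨t, ht, hty, htz, hat⟩ := h3
    exact no_three_nbrs hG hc hlen hx hy hz ht hyz hty.symm htz.symm h₁ h₂ hat
  · push_neg at h3
    have hall : ∀ t ∈ c.support, G.Adj x t → t = y ∨ t = z := by
      intro t ht hadj
      by_contra hcon
      push_neg at hcon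
      exact (h3 t ht hcon.1 hcon.2) hadj
    obtain ⟨P₁, P₂, hp1, hp2, hinter, hsupp, hedges, hlensum⟩ := split_cycle hc.1 hy hz hyz
    set p₃ : G.Walk y z := Walk.cons h₁.symm (Walk.cons h₂ Walk.nil) with hp₃def
    have hp₃sup : p₃.support = [y, x, z] := by simp [hp₃def]
    have hp₃edg : p₃.edges = [s(y, x), s(x, z)] := by simp [hp₃def]
    have hP₁sub : ∀ w ∈ P₁.support, w ∈ c.support := fun w hw => (hsupp w).mpr (Or.inl hw)
    have hP₂sub : ∀ w ∈ P₂.support, w ∈ c.support := fun w hw => (hsupp w).mpr (Or.inr hw)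
    refine hG.1 ⟨y, z, P₁, P₂, p₃, hp1, hp2, ?_, ?_, ?_, by simp [hp₃def], hinter, ?_, ?_, ?_⟩
    · rw [Walk.isPath_def, hp₃sup]
      simp [hxy.symm, hxz, hyz]
    · exact two_le_length_of_not_adj' hyz hna P₁
    · exact two_le_length_of_not_adj' hyz hna P₂
    · intro w hw₁ hw₃
      rw [hp₃sup, List.mem_cons, List.mem_cons, List.mem_singleton] at hw₃
      rcases hw₃ with rfl | rfl | rfl
      · exact Or.inl rfl
      · exact absurd (hP₁sub w hw₁) hx
      · exact Or.inr rfl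
    · intro w hw₂ hw₃
      rw [hp₃sup, List.mem_cons, List.mem_cons, List.mem_singleton] at hw₃
      rcases hw₃ with rfl | rfl | rfl
      · exact Or.inl rfl
      · exact absurd (hP₂sub w hw₂) hx
      · exact Or.inr rfl
    · intro u w hu hw
      constructor
      · intro hadj
        have hcls : ∀ t, t ∈ P₁.support ++ P₂.support ++ p₃.support →
            t ∈ c.support ∨ t = x := by
          intro t ht
          rw [List.mem_append, List.mem_append, hp₃sup] at ht
          rcases ht with (ht | ht) | ht
          · exact Or.inl (hP₁sub t ht)
          · exact Or.inl (hP₂sub t ht)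
          · rw [List.mem_cons, List.mem_cons, List.mem_singleton] at ht
            rcases ht with rfl | rfl | rfl
            · exact Or.inl hy
            · exact Or.inr rfl
            · exact Or.inl hz
        rw [List.mem_append, List.mem_append, hp₃edg]
        rcases hcls u hu with huc | rfl
        · rcases hcls w hw with hwc | rfl
          · have := (hc.2 u huc w hwc).mp hadj
            rcases (hedges _).mp this with h | h
            · exact Or.inl (Or.inl h)
            · exact Or.inl (Or.inr h)
          · rcases hall u huc hadj.symm with rfl | rfl
            · exact Or.inr (by simp [Sym2.eq_swap])
            · exact Or.inr (by simp)
        · rcases hcls w hw with hwc | rfl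
          · rcases hall w hwc hadj with rfl | rfl
            · exact Or.inr (by simp)
            · exact Or.inr (by simp)
          · exact absurd rfl hadj.ne
      · intro he
        rw [List.mem_append, List.mem_append] at he
        rcases he with (h | h) | h
        · exact P₁.adj_of_mem_edges h
        · exact P₂.adj_of_mem_edges h
        · exact p₃.adj_of_mem_edges h

lemma nbr_adj (hG : UniversallySignable G) (hc : IsInducedCycle G c)
    (hlen : 3 < c.length) {x y z : V} (hx : x ∉ c.support)
    (hy : y ∈ c.support) (hz : z ∈ c.support) (hyz : y ≠ z)
    (h₁ : G.Adj x y) (h₂ : G.Adj x z) : G.Adj y z := by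
  by_contra hna
  exact no_two_nonadj hG hc hlen hx hy hz hyz hna h₁ h₂

lemma no_triangle (hc : IsInducedCycle G c) (hlen : 3 < c.length) {x y z : V}
    (hx : x ∈ c.support) (hy : y ∈ c.support) (hz : z ∈ c.support)
    (hxy : x ≠ y) (hxz : x ≠ z) (hyz : y ≠ z)
    (h₁ : G.Adj x y) (h₂ : G.Adj x z) (h₃ : G.Adj y z) : False := by
  obtain ⟨P₁, P₂, hp1, hp2, hinter, hsupp, hedges, hlensum⟩ := split_cycle hc.1 hx hy hxy
  have hmem : s(x, y) ∈ c.edges := (hc.2 x hx y hy).mp h₁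
  have key : ∀ (A B : G.Walk x y), A.IsPath → B.IsPath →
      (∀ w, w ∈ c.support ↔ w ∈ A.support ∨ w ∈ B.support) →
      (∀ e, e ∈ c.edges ↔ e ∈ A.edges ∨ e ∈ B.edges) →
      A.length + B.length = c.length → s(x, y) ∈ A.edges → False := by
    intro A B hA hB hsupp' hedges' hlen' hxyA
    have hA1 : A.length = 1 := length_eq_one_of_ends_edge hA hxyA
    have hAedg := (support_edges_of_length_one hA1).2
    have hAsup := (support_edges_of_length_one hA1).1
    have hzB : z ∈ B.support := by
      rcases (hsupp' z).mp hz with h | h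
      · rw [hAsup, List.mem_cons, List.mem_singleton] at h
        rcases h with rfl | rfl
        · exact absurd rfl hxz
        · exact absurd rfl hyz
      · exact h
    have hxzB : s(x, z) ∈ B.edges := by
      rcases (hedges' _).mp ((hc.2 x hx z hz).mp h₂) with h | h
      · rw [hAedg, List.mem_singleton, Sym2.eq_iff] at h
        rcases h with ⟨-, h1⟩ | ⟨h1, -⟩
        · exact absurd h1.symm hyz
        · exact absurd h1 hxy
      · exact h
    obtain ⟨hadj', B₁, rfl⟩ := edge_start_eq hB hxzB
    have hyzB : s(z, y) ∈ B₁.edges := by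
      rcases (hedges' _).mp ((hc.2 y hy z hz).mp h₃) with h | h
      · rw [hAedg, List.mem_singleton, Sym2.eq_iff] at h
        rcases h with ⟨h1, -⟩ | ⟨-, h2⟩
        · exact absurd h1.symm hxy
        · exact absurd h2.symm hxz
      · rw [Walk.edges_cons, List.mem_cons, Sym2.eq_iff] at h
        rcases h with h | h
        · rcases h with ⟨h1, -⟩ | ⟨h1, -⟩
          · exact absurd h1.symm hxy
          · exact absurd h1 hyz
        · rwa [Sym2.eq_swap] at h
    have hB₁path : B₁.IsPath := ((Walk.cons_isPath_iff _ _).mp hB).1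
    have hB₁len : B₁.length = 1 := length_eq_one_of_ends_edge hB₁path hyzB
    have : (Walk.cons hadj' B₁).length = 2 := by simp [hB₁len]
    omega
  rcases (hedges _).mp hmem with h | h
  · refine key P₁ P₂ hp1 hp2 hsupp hedges hlensum h
  · refine key P₂ P₁ hp2 hp1 (fun w => (hsupp w).trans or_comm)
      (fun e => (hedges e).trans or_comm) (by omega) h

end Aux4


section ConnSec

variable {G : SimpleGraph V}

/-- A connector over a vertex set `Cs`: an induced path of length at least two between
two distinct non-adjacent vertices of `Cs`, all of whose internal vertices avoid `Cs`. -/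
structure Conn (G : SimpleGraph V) (Cs : V → Prop) : Type where
  a : V
  b : V
  ha : Cs a
  hb : Cs b
  hne : a ≠ b
  hnadj : ¬ G.Adj a b
  q : G.Walk a b
  hq : IsInducedPath G q
  hlen2 : 2 ≤ q.length
  hout : ∀ y ∈ q.support, y ≠ a → y ≠ b → ¬ Cs y

def Conn.symm {Cs : V → Prop} (K : Conn G Cs) : Conn G Cs where
  a := K.b
  b := K.a
  ha := K.hb
  hb := K.ha
  hne := K.hne.symm
  hnadj := fun h => K.hnadj h.symm
  q := K.q.reverse
  hq := K.hq.reverse'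
  hlen2 := by rw [Walk.length_reverse]; exact K.hlen2
  hout := fun y hy h1 h2 =>
    K.hout y (by rwa [Walk.support_reverse, List.mem_reverse] at hy) h2 h1

@[simp] lemma Conn.symm_len {Cs : V → Prop} (K : Conn G Cs) :
    K.symm.q.length = K.q.length := Walk.length_reverse _

lemma conn_exists {Cs : V → Prop} {u w : V} (p : G.Walk u w) (hp : IsInducedPath G p)
    (hu : Cs u) (hw : Cs w) (hbad : ∃ x ∈ p.support, ¬ Cs x) : Nonempty (Conn G Cs) := by
  induction p with
  | nil =>
    obtain ⟨x, hx, hcx⟩ := hbad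
    simp only [Walk.support_nil, List.mem_singleton] at hx
    exact absurd (hx ▸ hu) hcx
  | @cons a s₂ w h' p' ih =>
    have hp' : IsInducedPath G p' := by
      have : IsInducedPath G ((Walk.cons h' Walk.nil).append p') := by
        rw [Walk.cons_nil_append]; exact hp
      exact this.of_append_right'
    by_cases hs₂ : Cs s₂
    · refine ih hp' hs₂ hw ?_
      obtain ⟨x, hx, hcx⟩ := hbad
      rw [Walk.support_cons, List.mem_cons] at hx
      rcases hx with rfl | hx
      · exact absurd hu hcx
      · exact ⟨x, hx, hcx⟩
    · obtain ⟨z, w₁, w₂, heq, hz, hnQ⟩ := firstHit p' Cs ⟨w, p'.end_mem_support, hw⟩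
      have hqind : IsInducedPath G ((Walk.cons h' w₁).append w₂) := by
        rw [Walk.cons_append, ← heq]; exact hp
      have hqI := hqind.of_append_left'
      have hzmem : z ∈ p'.support := by
        rw [heq]
        exact Walk.subset_support_append_left w₁ w₂ w₁.end_mem_support
      have hane : a ≠ z := by
        intro h
        exact ((Walk.cons_isPath_iff _ _).mp hp.1).2 (h ▸ hzmem)
      have hs₂z : s₂ ≠ z := fun h => hs₂ (h ▸ hz)
      have hzsup : z ∈ (Walk.cons h' w₁).support := by
        rw [Walk.support_cons]
        exact List.mem_cons_of_mem _ w₁.end_mem_support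
      refine ⟨⟨a, z, hu, hz, hane, ?_, Walk.cons h' w₁, hqI, ?_, ?_⟩⟩
      · intro hA
        have := (hqI.2 a (by simp) z hzsup).mp hA
        rw [Walk.edges_cons, List.mem_cons] at this
        rcases this with h | h
        · rw [Sym2.eq_iff] at h
          rcases h with ⟨-, h1⟩ | ⟨h1, -⟩
          · exact hs₂z h1.symm
          · exact h'.ne h1
        · exact ((Walk.cons_isPath_iff _ _).mp hqI.1).2
            (Walk.fst_mem_support_of_mem_edges w₁ h)
      · have : 1 ≤ w₁.length := one_le_length_of_ne' hs₂z w₁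
        simp only [Walk.length_cons]
        omega
      · intro y hy hya hyz
        rw [Walk.support_cons, List.mem_cons] at hy
        rcases hy with rfl | hy
        · exact absurd rfl hya
        · exact hnQ y hy hyz

lemma conn_build {Cs : V → Prop} {d₁ d₂ x y : V} (hd₁ : Cs d₁) (hd₂ : Cs d₂)
    (hne : d₁ ≠ d₂) (hnadj : ¬ G.Adj d₁ d₂) (mid : G.Walk x y)
    (hmid : IsInducedPath G mid) (hout : ∀ z ∈ mid.support, ¬ Cs z)
    (h₁ : G.Adj d₁ x) (h₂ : G.Adj y d₂)
    (hP : ∀ z ∈ mid.support, z ≠ x → ¬ G.Adj d₁ z)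
    (hQ : ∀ z ∈ mid.support, z ≠ y → ¬ G.Adj d₂ z) :
    ∃ K : Conn G Cs, K.q.length = mid.length + 2 := by
  set q : G.Walk d₁ d₂ := Walk.cons h₁ (mid.concat h₂) with hqdef
  have hsupq : q.support = d₁ :: (mid.support ++ [d₂]) := by
    rw [hqdef, Walk.support_cons, Walk.support_concat]
  have hedgq : q.edges = s(d₁, x) :: (mid.edges ++ [s(y, d₂)]) := by
    rw [hqdef, Walk.edges_cons, Walk.edges_concat, List.concat_eq_append]
  have hd₁m : d₁ ∉ mid.support := fun h => hout d₁ h hd₁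
  have hd₂m : d₂ ∉ mid.support := fun h => hout d₂ h hd₂
  have hpath : q.IsPath := by
    rw [Walk.isPath_def, hsupq, List.nodup_cons, List.nodup_append]
    refine ⟨?_, hmid.1.support_nodup, by simp, ?_⟩
    · rw [List.mem_append, List.mem_singleton]
      rintro (h | rfl)
      · exact hd₁m h
      · exact hne rfl
    · intro z hz z' hz' hzz
      rw [List.mem_singleton] at hz'
      exact hd₂m (by rw [← hz', ← hzz]; exact hz)
  have hcls : ∀ z ∈ q.support, z = d₁ ∨ z ∈ mid.support ∨ z = d₂ := by
    intro z hz
    rw [hsupq, List.mem_cons, List.mem_append, List.mem_singleton] at hz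
    tauto
  refine ⟨⟨d₁, d₂, hd₁, hd₂, hne, hnadj, q, ⟨hpath, ?_⟩, ?_, ?_⟩, ?_⟩
  · intro z hz z' hz'
    constructor
    · intro hadj
      rw [hedgq, List.mem_cons, List.mem_append, List.mem_singleton]
      rcases hcls z hz with rfl | hzm | rfl
      · rcases hcls z' hz' with rfl | hzm' | rfl
        · exact absurd rfl hadj.ne
        · rcases eq_or_ne z' x with rfl | hne'
          · exact Or.inl rfl
          · exact absurd hadj (hP z' hzm' hne')
        · exact absurd hadj hnadj
      · rcases hcls z' hz' with rfl | hzm' | rfl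
        · rcases eq_or_ne z x with rfl | hne'
          · exact Or.inl (Sym2.eq_swap)
          · exact absurd hadj.symm (hP z hzm hne')
        · exact Or.inr (Or.inl ((hmid.2 z hzm z' hzm').mp hadj))
        · rcases eq_or_ne z y with rfl | hne'
          · exact Or.inr (Or.inr rfl)
          · exact absurd hadj.symm (hQ z hzm hne')
      · rcases hcls z' hz' with rfl | hzm' | rfl
        · exact absurd hadj.symm hnadj
        · rcases eq_or_ne z' y with rfl | hne'
          · exact Or.inr (Or.inr Sym2.eq_swap)
          · exact absurd hadj (hQ z' hzm' hne')
        · exact absurd rfl hadj.ne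
    · exact fun he => q.adj_of_mem_edges he
  · rw [hqdef]
    simp only [Walk.length_cons, Walk.length_concat]
    omega
  · intro z hz h1 h2
    rcases hcls z hz with rfl | hzm | rfl
    · exact absurd rfl h1
    · exact hout z hzm
    · exact absurd rfl h2
  · show q.length = mid.length + 2
    rw [hqdef]
    simp only [Walk.length_cons, Walk.length_concat]

lemma walk_decomp_end {a b : V} (q : G.Walk a b) (h : 1 ≤ q.length) :
    ∃ (rm : V) (I : G.Walk a rm) (h₂ : G.Adj rm b), q = I.concat h₂ := by
  induction q with
  | nil => simp at h
  | @cons u x w h' p ih =>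
    rcases Nat.eq_zero_or_pos p.length with h0 | h0
    · cases p with
      | nil => exact ⟨u, Walk.nil, h', (Walk.concat_nil h').symm⟩
      | cons _ _ => simp at h0
    · obtain ⟨rm, I, h₂, heq⟩ := ih h0
      exact ⟨rm, Walk.cons h' I, h₂, by rw [heq, Walk.concat_cons]⟩

lemma walk_decomp {a b : V} (q : G.Walk a b) (h : 2 ≤ q.length) :
    ∃ (r₁ rm : V) (h₁ : G.Adj a r₁) (I : G.Walk r₁ rm) (h₂ : G.Adj rm b),
      q = Walk.cons h₁ (I.concat h₂) := by
  match q with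
  | .cons h₁ rest =>
    have : 1 ≤ rest.length := by
      have := congrArg Walk.length (rfl : Walk.cons h₁ rest = Walk.cons h₁ rest)
      simp only [Walk.length_cons] at h
      omega
    obtain ⟨rm, I, h₂, heq⟩ := walk_decomp_end rest this
    exact ⟨_, rm, h₁, I, h₂, by rw [heq]⟩

end ConnSec


section CaseLemmas

variable {G : SimpleGraph V} [DecidableEq V] {v : V} {c : G.Walk v v}

lemma q_sup {a b r₁ rm : V} (h₁ : G.Adj a r₁) (h₂ : G.Adj rm b) (I : G.Walk r₁ rm) :
    (Walk.cons h₁ (I.concat h₂)).support = a :: (I.support ++ [b]) := by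
  rw [Walk.support_cons, Walk.support_concat]

lemma q_edg {a b r₁ rm : V} (h₁ : G.Adj a r₁) (h₂ : G.Adj rm b) (I : G.Walk r₁ rm) :
    (Walk.cons h₁ (I.concat h₂)).edges = s(a, r₁) :: (I.edges ++ [s(rm, b)]) := by
  rw [Walk.edges_cons, Walk.edges_concat, List.concat_eq_append]

lemma q_endpoints_notmem {a b r₁ rm : V} {h₁ : G.Adj a r₁} {h₂ : G.Adj rm b}
    {I : G.Walk r₁ rm} (hq : (Walk.cons h₁ (I.concat h₂)).IsPath) :
    a ∉ I.support ∧ b ∉ I.support := by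
  have h := hq.support_nodup
  rw [q_sup, List.nodup_cons, List.nodup_append] at h
  obtain ⟨h1, -, -, h2⟩ := h
  constructor
  · intro ha
    exact h1 (by rw [List.mem_append]; exact Or.inl ha)
  · intro hb
    exact h2 b hb b (List.mem_singleton_self b) rfl

lemma theta_case (hG : UniversallySignable G) (hc : IsInducedCycle G c) (hlen : 3 < c.length)
    {a b r₁ rm : V} {h₁ : G.Adj a r₁} {h₂ : G.Adj rm b} {I : G.Walk r₁ rm}
    (ha : a ∈ c.support) (hb : b ∈ c.support) (hne : a ≠ b) (hnadj : ¬ G.Adj a b)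
    (hq : IsInducedPath G (Walk.cons h₁ (I.concat h₂)))
    (hIout : ∀ z ∈ I.support, z ∉ c.support)
    (hit : ∀ u ∈ c.support, ∀ z ∈ I.support, G.Adj u z →
      (u = a ∧ z = r₁) ∨ (u = b ∧ z = rm)) : False := by
  obtain ⟨P₁, P₂, hp1, hp2, hinter, hsupp, hedges, hlensum⟩ := split_cycle hc.1 ha hb hne
  set q : G.Walk a b := Walk.cons h₁ (I.concat h₂) with hqdef
  have hqs : q.support = a :: (I.support ++ [b]) := q_sup h₁ h₂ I
  have hqe : q.edges = s(a, r₁) :: (I.edges ++ [s(rm, b)]) := q_edg h₁ h₂ I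
  have hqcls : ∀ z ∈ q.support, z = a ∨ z ∈ I.support ∨ z = b := by
    intro z hz
    rw [hqs, List.mem_cons, List.mem_append, List.mem_singleton] at hz
    tauto
  have hP₁sub : ∀ w ∈ P₁.support, w ∈ c.support := fun w hw => (hsupp w).mpr (Or.inl hw)
  have hP₂sub : ∀ w ∈ P₂.support, w ∈ c.support := fun w hw => (hsupp w).mpr (Or.inr hw)
  have hIsubq : ∀ z ∈ I.support, z ∈ q.support := by
    intro z hz
    rw [hqs, List.mem_cons, List.mem_append]
    exact Or.inr (Or.inl hz)
  have har : s(a, r₁) ∈ q.edges := by rw [hqe]; exact List.mem_cons_self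
  have hbr : s(rm, b) ∈ q.edges := by
    rw [hqe, List.mem_cons, List.mem_append, List.mem_singleton]
    exact Or.inr (Or.inr rfl)
  have interq : ∀ (P : G.Walk a b), (∀ w ∈ P.support, w ∈ c.support) →
      ∀ z, z ∈ P.support → z ∈ q.support → z = a ∨ z = b := by
    intro P hP z hzP hzq
    rcases hqcls z hzq with rfl | hz | rfl
    · exact Or.inl rfl
    · exact absurd (hP z hzP) (hIout z hz)
    · exact Or.inr rfl
  refine hG.1 ⟨a, b, P₁, P₂, q, hp1, hp2, hq.1,
    two_le_length_of_not_adj' hne hnadj P₁, two_le_length_of_not_adj' hne hnadj P₂, ?_,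
    hinter, interq P₁ hP₁sub, interq P₂ hP₂sub, ?_⟩
  · rw [hqdef]; simp only [Walk.length_cons, Walk.length_concat]; omega
  · intro x y hx hy
    have hcls : ∀ z, z ∈ P₁.support ++ P₂.support ++ q.support →
        z ∈ c.support ∨ z ∈ I.support := by
      intro z hz
      rw [List.mem_append, List.mem_append] at hz
      rcases hz with (hz | hz) | hz
      · exact Or.inl (hP₁sub z hz)
      · exact Or.inl (hP₂sub z hz)
      · rcases hqcls z hz with rfl | hz | rfl
        · exact Or.inl ha
        · exact Or.inr hz
        · exact Or.inl hb
    constructor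
    · intro hadj
      rw [List.mem_append, List.mem_append]
      rcases hcls x hx with hxc | hxI
      · rcases hcls y hy with hyc | hyI
        · rcases (hedges _).mp ((hc.2 x hxc y hyc).mp hadj) with h | h
          · exact Or.inl (Or.inl h)
          · exact Or.inl (Or.inr h)
        · rcases hit x hxc y hyI hadj with ⟨rfl, rfl⟩ | ⟨rfl, rfl⟩
          · exact Or.inr har
          · exact Or.inr (Sym2.eq_swap ▸ hbr)
      · rcases hcls y hy with hyc | hyI
        · rcases hit y hyc x hxI hadj.symm with ⟨rfl, rfl⟩ | ⟨rfl, rfl⟩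
          · exact Or.inr (Sym2.eq_swap ▸ har)
          · exact Or.inr hbr
        · exact Or.inr ((hq.2 x (hIsubq x hxI) y (hIsubq y hyI)).mp hadj)
    · intro he
      rw [List.mem_append, List.mem_append] at he
      rcases he with (h | h) | h
      · exact P₁.adj_of_mem_edges h
      · exact P₂.adj_of_mem_edges h
      · exact q.adj_of_mem_edges h

lemma wheel_case (hG : UniversallySignable G) (hc : IsInducedCycle G c) (hlen : 3 < c.length)
    {a b r₁ rm d y₃ : V} {h₁ : G.Adj a r₁} {h₂ : G.Adj rm b} {I : G.Walk r₁ rm}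
    (ha : a ∈ c.support) (hb : b ∈ c.support) (hne : a ≠ b) (hnadj : ¬ G.Adj a b)
    (hq : IsInducedPath G (Walk.cons h₁ (I.concat h₂)))
    (hIout : ∀ z ∈ I.support, z ∉ c.support) (hIlen : 1 ≤ I.length)
    (hd : d ∈ c.support) (hda : d ≠ a) (hdb : d ≠ b)
    (hdA : G.Adj d a) (hdB : G.Adj d b) (hy₃ : y₃ ∈ I.support) (hdy₃ : G.Adj d y₃)
    (hit : ∀ u ∈ c.support, ∀ z ∈ I.support, G.Adj u z →
      u = d ∨ (u = a ∧ z = r₁) ∨ (u = b ∧ z = rm)) : False := by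
  obtain ⟨P₁, P₂, hp1, hp2, hinter, hsupp, hedges, hlensum⟩ := split_cycle hc.1 ha hb hne
  have chordfree : ∀ (A B : G.Walk a b),
      (∀ w, w ∈ A.support → w ∈ B.support → w = a ∨ w = b) →
      (∀ e, e ∈ c.edges ↔ e ∈ A.edges ∨ e ∈ B.edges) →
      (∀ w ∈ B.support, w ∈ c.support) →
      ∀ x y, x ∈ B.support → y ∈ B.support → G.Adj x y → s(x, y) ∈ B.edges := by
    intro A B hAB hE hBc x y hx hy hadj
    rcases (hE _).mp ((hc.2 x (hBc x hx) y (hBc y hy)).mp hadj) with h | h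
    · have hxA := Walk.fst_mem_support_of_mem_edges A h
      have hyA := Walk.snd_mem_support_of_mem_edges A h
      rcases hAB x hxA hx with rfl | rfl <;> rcases hAB y hyA hy with rfl | rfl
      · exact absurd rfl hadj.ne
      · exact absurd hadj hnadj
      · exact absurd hadj.symm hnadj
      · exact absurd rfl hadj.ne
    · exact h
  have key : ∀ (A B : G.Walk a b), B.IsPath →
      (∀ w, w ∈ A.support → w ∈ B.support → w = a ∨ w = b) →
      (∀ z, z ∈ c.support ↔ z ∈ A.support ∨ z ∈ B.support) →
      (∀ e, e ∈ c.edges ↔ e ∈ A.edges ∨ e ∈ B.edges) →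
      d ∉ B.support → False := by
    intro A B hBp hAB hS hE hdB'
    have hBc : ∀ w ∈ B.support, w ∈ c.support := fun w hw => (hS w).mpr (Or.inr hw)
    have hcf := chordfree A B hAB hE hBc
    set q : G.Walk a b := Walk.cons h₁ (I.concat h₂) with hqdef
    have hqs : q.support = a :: (I.support ++ [b]) := q_sup h₁ h₂ I
    have hqe : q.edges = s(a, r₁) :: (I.edges ++ [s(rm, b)]) := q_edg h₁ h₂ I
    have hqcls : ∀ z ∈ q.support, z = a ∨ z ∈ I.support ∨ z = b := by
      intro z hz
      rw [hqs, List.mem_cons, List.mem_append, List.mem_singleton] at hz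
      tauto
    have har : s(a, r₁) ∈ q.edges := by rw [hqe]; exact List.mem_cons_self
    have hbr : s(rm, b) ∈ q.edges := by
      rw [hqe, List.mem_cons, List.mem_append, List.mem_singleton]
      exact Or.inr (Or.inr rfl)
    have hIsubq : ∀ z ∈ I.support, z ∈ q.support := by
      intro z hz
      rw [hqs, List.mem_cons, List.mem_append]
      exact Or.inr (Or.inl hz)
    set K : G.Walk a a := q.append B.reverse with hKdef
    have hKsup : K.support = q.support ++ B.reverse.support.tail := Walk.support_append _ _
    have hKedg : K.edges = q.edges ++ B.reverse.edges := Walk.edges_append _ _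
    have hBrs : B.reverse.support = b :: B.reverse.support.tail := Walk.support_eq_cons _
    have hBrnodup : B.reverse.support.Nodup := hBp.reverse.support_nodup
    have hbBt : b ∉ B.reverse.support.tail := by
      rw [hBrs] at hBrnodup
      exact (List.nodup_cons.mp hBrnodup).1
    have hBt_sub : ∀ z ∈ B.reverse.support.tail, z ∈ B.support := by
      intro z hz
      have := List.tail_subset _ hz
      rwa [Walk.support_reverse, List.mem_reverse] at this
    have hKcls : ∀ z ∈ K.support, z ∈ I.support ∨ z ∈ B.support := by
      intro z hz
      rw [hKsup, List.mem_append] at hz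
      rcases hz with hz | hz
      · rcases hqcls z hz with rfl | hz | rfl
        · exact Or.inr B.start_mem_support
        · exact Or.inl hz
        · exact Or.inr B.end_mem_support
      · exact Or.inr (hBt_sub z hz)
    have hqsubK : ∀ z ∈ q.support, z ∈ K.support := by
      intro z hz; rw [hKsup, List.mem_append]; exact Or.inl hz
    have hdisjE : ∀ e ∈ q.edges, e ∈ B.edges → False := by
      intro e he heB
      induction e using Sym2.ind with
      | _ x y =>
        have hxB : x ∈ c.support := hBc x (Walk.fst_mem_support_of_mem_edges B heB)
        have hyB : y ∈ c.support := hBc y (Walk.snd_mem_support_of_mem_edges B heB)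
        rw [hqe, List.mem_cons, List.mem_append, List.mem_singleton] at he
        rcases he with he | he | he
        · rw [Sym2.eq_iff] at he
          rcases he with ⟨-, rfl⟩ | ⟨rfl, -⟩
          · exact hIout _ I.start_mem_support hyB
          · exact hIout _ I.start_mem_support hxB
        · exact hIout x (Walk.fst_mem_support_of_mem_edges I he) hxB
        · rw [Sym2.eq_iff] at he
          rcases he with ⟨rfl, -⟩ | ⟨-, rfl⟩
          · exact hIout _ I.end_mem_support hxB
          · exact hIout _ I.end_mem_support hyB
    have hKlen : K.length = I.length + 2 + B.length := by
      rw [hKdef, Walk.length_append, Walk.length_reverse, hqdef]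
      simp only [Walk.length_cons, Walk.length_concat]
    have hBlen : 2 ≤ B.length := two_le_length_of_not_adj' hne hnadj B
    have hKcyc : K.IsCycle := by
      rw [Walk.isCycle_def]
      refine ⟨?_, ?_, ?_⟩
      · rw [Walk.isTrail_def, hKedg, List.nodup_append]
        refine ⟨hq.1.edges_nodup, hBp.reverse.edges_nodup, ?_⟩
        intro e he e' he' hee
        rw [Walk.edges_reverse, List.mem_reverse] at he'
        exact hdisjE e he (hee ▸ he')
      · intro hKnil
        have := congrArg Walk.length hKnil
        rw [hKlen] at this
        simp at this
      · have htl : K.support.tail = (I.support ++ [b]) ++ B.reverse.support.tail := by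
          rw [hKsup, hqs, List.cons_append, List.tail_cons]
        rw [htl, List.nodup_append]
        have hqnodup := hq.1.support_nodup
        rw [hqs, List.nodup_cons] at hqnodup
        refine ⟨hqnodup.2, (List.nodup_cons.mp (hBrs ▸ hBrnodup)).2, ?_⟩
        intro z hz z' hz' hzz
        subst hzz
        rw [List.mem_append, List.mem_singleton] at hz
        rcases hz with hz | rfl
        · exact hIout z hz (hBc z (hBt_sub z hz'))
        · exact hbBt hz'
    have hKind : ∀ x ∈ K.support, ∀ y ∈ K.support, (G.Adj x y ↔ s(x, y) ∈ K.edges) := by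
      intro x hx y hy
      constructor
      · intro hadj
        rw [hKedg, List.mem_append]
        rcases hKcls x hx with hxI | hxB
        · rcases hKcls y hy with hyI | hyB
          · exact Or.inl ((hq.2 x (hIsubq x hxI) y (hIsubq y hyI)).mp hadj)
          · rcases hit y (hBc y hyB) x hxI hadj.symm with rfl | ⟨rfl, rfl⟩ | ⟨rfl, rfl⟩
            · exact absurd hyB hdB'
            · exact Or.inl (Sym2.eq_swap ▸ har)
            · exact Or.inl hbr
        · rcases hKcls y hy with hyI | hyB
          · rcases hit x (hBc x hxB) y hyI hadj with rfl | ⟨rfl, rfl⟩ | ⟨rfl, rfl⟩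
            · exact absurd hxB hdB'
            · exact Or.inl har
            · exact Or.inl (Sym2.eq_swap ▸ hbr)
          · refine Or.inr ?_
            rw [Walk.edges_reverse, List.mem_reverse]
            exact hcf x y hxB hyB hadj
      · intro he
        exact K.adj_of_mem_edges he
    have hdK : d ∉ K.support := by
      intro h
      rcases hKcls d h with h | h
      · exact hIout d h hd
      · exact hdB' h
    refine hG.2.2.2 ⟨a, d, K, ⟨hKcyc, hKind⟩, by omega, hdK, a, b, y₃, hne, ?_, ?_,
      K.start_mem_support, hqsubK b (by rw [hqs]; simp),
      hqsubK y₃ (hIsubq y₃ hy₃), hdA, hdB, hdy₃⟩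
    · intro h; exact hIout y₃ hy₃ (h ▸ ha)
    · intro h; exact hIout y₃ hy₃ (h ▸ hb)
  rcases (hsupp d).mp hd with hd1 | hd1
  · have hdP₂ : d ∉ P₂.support := by
      intro h
      rcases hinter d hd1 h with rfl | rfl
      · exact hda rfl
      · exact hdb rfl
    exact key P₁ P₂ hp2 hinter hsupp hedges hdP₂
  · by_cases hd2 : d ∈ P₁.support
    · have hdP₂ : d ∉ P₂.support := by
        intro h
        rcases hinter d hd2 h with rfl | rfl
        · exact hda rfl
        · exact hdb rfl
      exact key P₁ P₂ hp2 hinter hsupp hedges hdP₂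
    · exact key P₂ P₁ hp1 (fun w hw1 hw2 => hinter w hw2 hw1)
        (fun z => (hsupp z).trans or_comm) (fun e => (hedges e).trans or_comm) hd2

lemma pyramid_case (hG : UniversallySignable G) (hc : IsInducedCycle G c) (hlen : 3 < c.length)
    {a b r₁ rm a' : V} {h₁ : G.Adj a r₁} {h₂ : G.Adj rm b} {I : G.Walk r₁ rm}
    (ha : a ∈ c.support) (hb : b ∈ c.support) (hne : a ≠ b) (hnadj : ¬ G.Adj a b)
    (hq : IsInducedPath G (Walk.cons h₁ (I.concat h₂)))
    (hIout : ∀ z ∈ I.support, z ∉ c.support) (hIlen : 1 ≤ I.length)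
    (ha' : a' ∈ c.support) (ha'a : a' ≠ a) (ha'b : a' ≠ b)
    (haa' : G.Adj a a') (ha'r : G.Adj a' r₁)
    (hit : ∀ u ∈ c.support, ∀ z ∈ I.support, G.Adj u z →
      (u = a ∧ z = r₁) ∨ (u = a' ∧ z = r₁) ∨ (u = b ∧ z = rm)) : False := by
  obtain ⟨haI, hbI⟩ := q_endpoints_notmem hq.1
  have hqe : (Walk.cons h₁ (I.concat h₂)).edges = s(a, r₁) :: (I.edges ++ [s(rm, b)]) :=
    q_edg h₁ h₂ I
  have hqs : (Walk.cons h₁ (I.concat h₂)).support = a :: (I.support ++ [b]) := q_sup h₁ h₂ I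
  have hIsubq : ∀ z ∈ I.support, z ∈ (Walk.cons h₁ (I.concat h₂)).support := by
    intro z hz
    rw [hqs, List.mem_cons, List.mem_append]
    exact Or.inr (Or.inl hz)
  obtain ⟨Q₁, Q₂, hp1, hp2, hinter, hsupp, hedges, hlensum⟩ := split_cycle hc.1 ha ha' haa'.ne
  have he₀ : s(a, a') ∈ c.edges := (hc.2 a ha a' ha').mp haa'
  have key : ∀ (E Q : G.Walk a a'), E.IsPath → Q.IsPath →
      (∀ w, w ∈ E.support → w ∈ Q.support → w = a ∨ w = a') →
      (∀ z, z ∈ c.support ↔ z ∈ E.support ∨ z ∈ Q.support) →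
      (∀ e, e ∈ c.edges ↔ e ∈ E.edges ∨ e ∈ Q.edges) →
      s(a, a') ∈ E.edges → False := by
    intro E Q hEp hQp hEQ hS hE he
    have hE1 : E.length = 1 := length_eq_one_of_ends_edge hEp he
    obtain ⟨hEsup, hEedg⟩ := support_edges_of_length_one hE1
    have hbQ : b ∈ Q.support := by
      rcases (hS b).mp hb with h | h
      · rw [hEsup, List.mem_cons, List.mem_singleton] at h
        rcases h with rfl | rfl
        · exact absurd rfl hne
        · exact absurd rfl ha'b
      · exact h
    set T := Q.takeUntil b hbQ with hTdef
    set S := Q.dropUntil b hbQ with hSdef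
    have hspec : T.append S = Q := Q.take_spec hbQ
    have hTp : T.IsPath := hQp.takeUntil hbQ
    have hSp : S.IsPath := hQp.dropUntil hbQ
    have hQp' : (T.append S).IsPath := by rw [hspec]; exact hQp
    have hTS : ∀ z, z ∈ T.support → z ∈ S.support → z = b :=
      fun z hz1 hz2 => eq_mid_of_mem_inter hQp' hz1 hz2
    have hQsub : ∀ z ∈ Q.support, z ∈ c.support := fun z hz => (hS z).mpr (Or.inr hz)
    have hTsub : ∀ z ∈ T.support, z ∈ c.support :=
      fun z hz => hQsub z (Walk.support_takeUntil_subset Q hbQ hz)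
    have hSsub : ∀ z ∈ S.support, z ∈ c.support :=
      fun z hz => hQsub z (Walk.support_dropUntil_subset Q hbQ hz)
    have hQedges : ∀ e, e ∈ Q.edges ↔ e ∈ T.edges ∨ e ∈ S.edges := by
      intro e
      rw [← hspec, Walk.edges_append, List.mem_append]
    -- the third path
    have hIcp : (I.concat h₂).IsPath := ((Walk.cons_isPath_iff _ _).mp hq.1).1
    set p₃ := (I.concat h₂).reverse with hp₃def
    have hp₃sup : ∀ z, z ∈ p₃.support ↔ z ∈ I.support ∨ z = b := by
      intro z
      rw [hp₃def, Walk.support_reverse, List.mem_reverse, Walk.support_concat,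
        List.mem_append, List.mem_singleton]
    have hp₃edg : ∀ e, e ∈ p₃.edges ↔ e ∈ I.edges ∨ e = s(rm, b) := by
      intro e
      rw [hp₃def, Walk.edges_reverse, List.mem_reverse, Walk.edges_concat,
        List.concat_eq_append, List.mem_append, List.mem_singleton]
    have hcls : ∀ z, z ∈ T.reverse.support ++ S.support ++ p₃.support →
        z ∈ c.support ∨ z ∈ I.support := by
      intro z hz
      rw [List.mem_append, List.mem_append, Walk.support_reverse, List.mem_reverse] at hz
      rcases hz with (hz | hz) | hz
      · exact Or.inl (hTsub z hz)
      · exact Or.inl (hSsub z hz)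
      · rcases (hp₃sup z).mp hz with hz | rfl
        · exact Or.inr hz
        · exact Or.inl hb
    refine hG.2.1 ⟨b, a, a', r₁, T.reverse, S, p₃, hTp.reverse, hSp, hIcp.reverse,
      haa', ha'r, h₁, ?_, ?_, ?_, ?_, ?_, ?_, ?_, ?_⟩
    · rw [Walk.length_reverse]
      exact le_trans (by omega) (two_le_length_of_not_adj' hne hnadj T)
    · exact one_le_length_of_ne' ha'b.symm S
    · rw [hp₃def, Walk.length_reverse, Walk.length_concat]
      omega
    · refine Or.inr (Or.inl ⟨?_, ?_⟩)
      · rw [Walk.length_reverse]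
        exact two_le_length_of_not_adj' hne hnadj T
      · rw [hp₃def, Walk.length_reverse, Walk.length_concat]
        omega
    · intro z hz1 hz2
      rw [Walk.support_reverse, List.mem_reverse] at hz1
      exact hTS z hz1 hz2
    · intro z hz1 hz3
      rw [Walk.support_reverse, List.mem_reverse] at hz1
      rcases (hp₃sup z).mp hz3 with hz | rfl
      · exact absurd (hTsub z hz1) (hIout z hz)
      · rfl
    · intro z hz2 hz3
      rcases (hp₃sup z).mp hz3 with hz | rfl
      · exact absurd (hSsub z hz2) (hIout z hz)
      · rfl
    · intro x y hx hy
      constructor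
      · intro hadj
        rw [List.mem_append, List.mem_append]
        rcases hcls x hx with hxc | hxI
        · rcases hcls y hy with hyc | hyI
          · rcases (hE _).mp ((hc.2 x hxc y hyc).mp hadj) with h | h
            · rw [hEedg, List.mem_singleton] at h
              exact Or.inr (by rw [h]; exact List.mem_cons_self)
            · rcases (hQedges _).mp h with h | h
              · refine Or.inl (Or.inl (Or.inl ?_))
                rw [Walk.edges_reverse, List.mem_reverse]
                exact h
              · exact Or.inl (Or.inl (Or.inr h))
          · rcases hit x hxc y hyI hadj with ⟨rfl, rfl⟩ | ⟨rfl, rfl⟩ | ⟨rfl, rfl⟩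
            · exact Or.inr (by simp)
            · exact Or.inr (by simp)
            · exact Or.inl (Or.inr ((hp₃edg _).mpr (Or.inr Sym2.eq_swap)))
        · rcases hcls y hy with hyc | hyI
          · rcases hit y hyc x hxI hadj.symm with ⟨rfl, rfl⟩ | ⟨rfl, rfl⟩ | ⟨rfl, rfl⟩
            · exact Or.inr (by simp [Sym2.eq_swap])
            · exact Or.inr (by simp [Sym2.eq_swap])
            · exact Or.inl (Or.inr ((hp₃edg _).mpr (Or.inr rfl)))
          · -- both in I
            have := (hq.2 x (hIsubq x hxI) y (hIsubq y hyI)).mp hadj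
            rw [hqe, List.mem_cons, List.mem_append, List.mem_singleton] at this
            rcases this with h | h | h
            · exfalso
              rw [Sym2.eq_iff] at h
              rcases h with ⟨rfl, -⟩ | ⟨-, rfl⟩
              · exact haI hxI
              · exact haI hyI
            · exact Or.inl (Or.inr ((hp₃edg _).mpr (Or.inl h)))
            · exfalso
              rw [Sym2.eq_iff] at h
              rcases h with ⟨-, rfl⟩ | ⟨rfl, -⟩
              · exact hbI hyI
              · exact hbI hxI
      · intro he
        rw [List.mem_append, List.mem_append] at he
        rcases he with (h | h) | h
        · rcases h with h | h
          · exact T.reverse.adj_of_mem_edges h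
          · exact S.adj_of_mem_edges h
        · exact p₃.adj_of_mem_edges h
        · rw [List.mem_cons, List.mem_cons, List.mem_singleton] at h
          rcases h with h | h | h <;> rw [Sym2.eq_iff] at h <;>
            rcases h with ⟨rfl, rfl⟩ | ⟨rfl, rfl⟩
          · exact haa'
          · exact haa'.symm
          · exact ha'r
          · exact ha'r.symm
          · exact h₁
          · exact h₁.symm
  rcases (hedges _).mp he₀ with h | h
  · exact key Q₁ Q₂ hp1 hp2 hinter hsupp hedges h
  · exact key Q₂ Q₁ hp2 hp1 (fun w hw1 hw2 => hinter w hw2 hw1)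
      (fun z => (hsupp z).trans or_comm) (fun e => (hedges e).trans or_comm) h

lemma prism_case (hG : UniversallySignable G) (hc : IsInducedCycle G c) (hlen : 3 < c.length)
    {a b r₁ rm a' b' : V} {h₁ : G.Adj a r₁} {h₂ : G.Adj rm b} {I : G.Walk r₁ rm}
    (ha : a ∈ c.support) (hb : b ∈ c.support) (hne : a ≠ b) (hnadj : ¬ G.Adj a b)
    (hq : IsInducedPath G (Walk.cons h₁ (I.concat h₂)))
    (hIout : ∀ z ∈ I.support, z ∉ c.support) (hIlen : 1 ≤ I.length)
    (ha' : a' ∈ c.support) (ha'a : a' ≠ a) (ha'b : a' ≠ b)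
    (haa' : G.Adj a a') (ha'r : G.Adj a' r₁)
    (hb'm : b' ∈ c.support) (hb'a : b' ≠ a) (hb'b : b' ≠ b)
    (hbb' : G.Adj b b') (hb'r : G.Adj b' rm)
    (hab : a' ≠ b')
    (hit : ∀ u ∈ c.support, ∀ z ∈ I.support, G.Adj u z →
      (u = a ∧ z = r₁) ∨ (u = a' ∧ z = r₁) ∨ (u = b ∧ z = rm) ∨ (u = b' ∧ z = rm)) :
    False := by
  obtain ⟨haI, hbI⟩ := q_endpoints_notmem hq.1
  have hqe : (Walk.cons h₁ (I.concat h₂)).edges = s(a, r₁) :: (I.edges ++ [s(rm, b)]) :=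
    q_edg h₁ h₂ I
  have hqs : (Walk.cons h₁ (I.concat h₂)).support = a :: (I.support ++ [b]) := q_sup h₁ h₂ I
  have hIsubq : ∀ z ∈ I.support, z ∈ (Walk.cons h₁ (I.concat h₂)).support := by
    intro z hz
    rw [hqs, List.mem_cons, List.mem_append]
    exact Or.inr (Or.inl hz)
  have hIp : I.IsPath := by
    have : (I.append (Walk.cons h₂ Walk.nil)).IsPath := by
      rw [← Walk.concat_eq_append]
      exact ((Walk.cons_isPath_iff _ _).mp hq.1).1
    exact this.of_append_left
  have hIIedges : ∀ x y, x ∈ I.support → y ∈ I.support → G.Adj x y → s(x, y) ∈ I.edges := by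
    intro x y hx hy hadj
    have := (hq.2 x (hIsubq x hx) y (hIsubq y hy)).mp hadj
    rw [hqe, List.mem_cons, List.mem_append, List.mem_singleton] at this
    rcases this with h | h | h
    · exfalso
      rw [Sym2.eq_iff] at h
      rcases h with ⟨rfl, -⟩ | ⟨-, rfl⟩
      · exact haI hx
      · exact haI hy
    · exact h
    · exfalso
      rw [Sym2.eq_iff] at h
      rcases h with ⟨-, rfl⟩ | ⟨rfl, -⟩
      · exact hbI hy
      · exact hbI hx
  obtain ⟨Q₁, Q₂, hp1, hp2, hinter, hsupp, hedges, hlensum⟩ := split_cycle hc.1 ha ha' haa'.ne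
  have he₀ : s(a, a') ∈ c.edges := (hc.2 a ha a' ha').mp haa'
  have key : ∀ (E Q : G.Walk a a'), E.IsPath → Q.IsPath →
      (∀ w, w ∈ E.support → w ∈ Q.support → w = a ∨ w = a') →
      (∀ z, z ∈ c.support ↔ z ∈ E.support ∨ z ∈ Q.support) →
      (∀ e, e ∈ c.edges ↔ e ∈ E.edges ∨ e ∈ Q.edges) →
      s(a, a') ∈ E.edges → False := by
    intro E Q hEp hQp hEQ hS hE he
    have hE1 : E.length = 1 := length_eq_one_of_ends_edge hEp he
    obtain ⟨hEsup, hEedg⟩ := support_edges_of_length_one hE1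
    have hbQ : b ∈ Q.support := by
      rcases (hS b).mp hb with h | h
      · rw [hEsup, List.mem_cons, List.mem_singleton] at h
        rcases h with rfl | rfl
        · exact absurd rfl hne
        · exact absurd rfl ha'b
      · exact h
    have hb'Q : b' ∈ Q.support := by
      rcases (hS b').mp hb'm with h | h
      · rw [hEsup, List.mem_cons, List.mem_singleton] at h
        rcases h with rfl | rfl
        · exact absurd rfl hb'a
        · exact absurd rfl hab.symm
      · exact h
    set T := Q.takeUntil b hbQ with hTdef
    set S := Q.dropUntil b hbQ with hSdef
    have hspec : T.append S = Q := Q.take_spec hbQ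
    have hTp : T.IsPath := hQp.takeUntil hbQ
    have hSp : S.IsPath := hQp.dropUntil hbQ
    have hQp' : (T.append S).IsPath := by rw [hspec]; exact hQp
    have hTS : ∀ z, z ∈ T.support → z ∈ S.support → z = b :=
      fun z hz1 hz2 => eq_mid_of_mem_inter hQp' hz1 hz2
    have hQsub : ∀ z ∈ Q.support, z ∈ c.support := fun z hz => (hS z).mpr (Or.inr hz)
    have hTsub : ∀ z ∈ T.support, z ∈ c.support :=
      fun z hz => hQsub z (Walk.support_takeUntil_subset Q hbQ hz)
    have hSsub : ∀ z ∈ S.support, z ∈ c.support :=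
      fun z hz => hQsub z (Walk.support_dropUntil_subset Q hbQ hz)
    have hQedges : ∀ e, e ∈ Q.edges ↔ e ∈ T.edges ∨ e ∈ S.edges := by
      intro e
      rw [← hspec, Walk.edges_append, List.mem_append]
    have hEedge_excl : ∀ (x y : V), s(x, y) = s(a, a') → x ≠ a → x ≠ a' → False := by
      intro x y hxy hxa hxa'
      rw [Sym2.eq_iff] at hxy
      rcases hxy with ⟨rfl, -⟩ | ⟨rfl, -⟩
      · exact hxa rfl
      · exact hxa' rfl
    have hbb'c : s(b, b') ∈ c.edges := (hc.2 b hb b' hb'm).mp hbb'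
    by_cases hb'T : b' ∈ T.support
    · -- Case 2: b' appears on Q before b
      set T' := T.takeUntil b' hb'T with hT'def
      set U := T.dropUntil b' hb'T with hUdef
      have hspecT : T'.append U = T := T.take_spec hb'T
      have hT'p : T'.IsPath := hTp.takeUntil hb'T
      have hUp : U.IsPath := hTp.dropUntil hb'T
      have hTp' : (T'.append U).IsPath := by rw [hspecT]; exact hTp
      have hT'U : ∀ z, z ∈ T'.support → z ∈ U.support → z = b' :=
        fun z hz1 hz2 => eq_mid_of_mem_inter hTp' hz1 hz2
      have hT'sub : ∀ z ∈ T'.support, z ∈ T.support :=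
        fun z hz => Walk.support_takeUntil_subset T hb'T hz
      have hbT' : b ∉ T'.support := by
        intro h
        exact hb'b.symm (hT'U b h U.end_mem_support)
      have hTedges : ∀ e, e ∈ T.edges ↔ e ∈ T'.edges ∨ e ∈ U.edges := by
        intro e
        rw [← hspecT, Walk.edges_append, List.mem_append]
      have hUb : s(b', b) ∈ U.edges := by
        rcases (hE _).mp hbb'c with h | h
        · exfalso
          rw [hEedg, List.mem_singleton] at h
          rw [Sym2.eq_swap] at h
          exact hEedge_excl b' b h hb'a hab.symm
        · rcases (hQedges _).mp h with h | h
          · rcases (hTedges _).mp h with h | h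
            · exact absurd (Walk.fst_mem_support_of_mem_edges T' h) hbT'
            · rwa [Sym2.eq_swap] at h
          · exact absurd (hTS b' (hb'T) (Walk.fst_mem_support_of_mem_edges S
              (by rwa [Sym2.eq_swap] at h))) hb'b
      have hU1 : U.length = 1 := length_eq_one_of_ends_edge hUp hUb
      obtain ⟨hUsup, hUedg⟩ := support_edges_of_length_one hU1
      -- the prism: triangles (a, a', r₁) and (b', b, rm)
      -- paths: T' : a → b', S.reverse : a' → b, I : r₁ → rm
      have hdisj12 : ∀ z ∈ T'.support, z ∉ S.reverse.support := by
        intro z hz hz2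
        rw [Walk.support_reverse, List.mem_reverse] at hz2
        exact hbT' ((hTS z (hT'sub z hz) hz2) ▸ hz)
      have hcls : ∀ z, z ∈ T'.support ++ S.reverse.support ++ I.support →
          z ∈ c.support ∨ z ∈ I.support := by
        intro z hz
        rw [List.mem_append, List.mem_append, Walk.support_reverse, List.mem_reverse] at hz
        rcases hz with (hz | hz) | hz
        · exact Or.inl (hTsub z (hT'sub z hz))
        · exact Or.inl (hSsub z hz)
        · exact Or.inr hz
      refine hG.2.2.1 ⟨a, a', r₁, b', b, rm, T', S.reverse, I, hT'p, hSp.reverse, hIp,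
        haa', ha'r, h₁, hbb'.symm, h₂.symm, hb'r, hdisj12, ?_, ?_, ?_⟩
      · intro z hz hz3
        exact hIout z hz3 (hTsub z (hT'sub z hz))
      · intro z hz hz3
        rw [Walk.support_reverse, List.mem_reverse] at hz
        exact hIout z hz3 (hSsub z hz)
      · intro x y hx hy
        constructor
        · intro hadj
          rw [List.mem_append, List.mem_append]
          rcases hcls x hx with hxc | hxI
          · rcases hcls y hy with hyc | hyI
            · rcases (hE _).mp ((hc.2 x hxc y hyc).mp hadj) with h | h
              · rw [hEedg, List.mem_singleton] at h
                exact Or.inr (by rw [h]; exact List.mem_cons_self)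
              · rcases (hQedges _).mp h with h | h
                · rcases (hTedges _).mp h with h | h
                  · exact Or.inl (Or.inl (Or.inl h))
                  · rw [hUedg, List.mem_singleton] at h
                    exact Or.inr (by rw [h]; simp)
                · refine Or.inl (Or.inl (Or.inr ?_))
                  rw [Walk.edges_reverse, List.mem_reverse]
                  exact h
            · rcases hit x hxc y hyI hadj with ⟨rfl, rfl⟩ | ⟨rfl, rfl⟩ | ⟨rfl, rfl⟩ | ⟨rfl, rfl⟩
              · exact Or.inr (by simp)
              · exact Or.inr (by simp)
              · exact Or.inr (by simp)
              · exact Or.inr (by simp)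
          · rcases hcls y hy with hyc | hyI
            · rcases hit y hyc x hxI hadj.symm with ⟨rfl, rfl⟩ | ⟨rfl, rfl⟩ | ⟨rfl, rfl⟩ | ⟨rfl, rfl⟩
              · exact Or.inr (by simp [Sym2.eq_swap])
              · exact Or.inr (by simp [Sym2.eq_swap])
              · exact Or.inr (by simp [Sym2.eq_swap])
              · exact Or.inr (by simp [Sym2.eq_swap])
            · exact Or.inl (Or.inr (hIIedges x y hxI hyI hadj))
        · intro he
          rw [List.mem_append, List.mem_append] at he
          rcases he with (h | h) | h
          · rcases h with h | h
            · exact T'.adj_of_mem_edges h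
            · exact S.reverse.adj_of_mem_edges h
          · exact I.adj_of_mem_edges h
          · simp only [List.mem_cons, List.mem_singleton, List.not_mem_nil, or_false] at h
            rcases h with h | h | h | h | h | h <;> rw [Sym2.eq_iff] at h <;>
              rcases h with ⟨rfl, rfl⟩ | ⟨rfl, rfl⟩
            · exact haa'
            · exact haa'.symm
            · exact ha'r
            · exact ha'r.symm
            · exact h₁
            · exact h₁.symm
            · exact hbb'.symm
            · exact hbb'
            · exact h₂.symm
            · exact h₂
            · exact hb'r
            · exact hb'r.symm
    · -- Case 1: b' appears on Q after b
      have hb'S : b' ∈ S.support := by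
        rcases (Walk.mem_support_append_iff _ _).mp (by rw [hspec]; exact hb'Q) with h | h
        · exact absurd h hb'T
        · exact h
      have hSb : s(b, b') ∈ S.edges := by
        rcases (hE _).mp hbb'c with h | h
        · exfalso
          rw [hEedg, List.mem_singleton] at h
          exact hEedge_excl b b' h hne.symm ha'b.symm
        · rcases (hQedges _).mp h with h | h
          · exact absurd (Walk.snd_mem_support_of_mem_edges T h) hb'T
          · exact h
      obtain ⟨hS1, S₁, hSeq⟩ := edge_start_eq hSp hSb
      have hbS₁ : b ∉ S₁.support := by
        have := hSp
        rw [hSeq, Walk.cons_isPath_iff] at this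
        exact this.2
      have hS₁sub : ∀ z ∈ S₁.support, z ∈ S.support := by
        intro z hz
        rw [hSeq, Walk.support_cons]
        exact List.mem_cons_of_mem _ hz
      have hdisj12 : ∀ z ∈ T.support, z ∉ S₁.reverse.support := by
        intro z hz hz2
        rw [Walk.support_reverse, List.mem_reverse] at hz2
        exact hbS₁ ((hTS z hz (hS₁sub z hz2)) ▸ hz2)
      have hcls : ∀ z, z ∈ T.support ++ S₁.reverse.support ++ I.support →
          z ∈ c.support ∨ z ∈ I.support := by
        intro z hz
        rw [List.mem_append, List.mem_append, Walk.support_reverse, List.mem_reverse] at hz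
        rcases hz with (hz | hz) | hz
        · exact Or.inl (hTsub z hz)
        · exact Or.inl (hSsub z (hS₁sub z hz))
        · exact Or.inr hz
      have hSedges : ∀ e, e ∈ S.edges ↔ e = s(b, b') ∨ e ∈ S₁.edges := by
        intro e
        rw [hSeq, Walk.edges_cons, List.mem_cons]
      refine hG.2.2.1 ⟨a, a', r₁, b, b', rm, T, S₁.reverse, I, hTp, ((Walk.cons_isPath_iff _ _).mp
        (hSeq ▸ hSp)).1.reverse, hIp, haa', ha'r, h₁, hbb', hb'r, h₂.symm, hdisj12, ?_, ?_, ?_⟩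
      · intro z hz hz3
        exact hIout z hz3 (hTsub z hz)
      · intro z hz hz3
        rw [Walk.support_reverse, List.mem_reverse] at hz
        exact hIout z hz3 (hSsub z (hS₁sub z hz))
      · intro x y hx hy
        constructor
        · intro hadj
          rw [List.mem_append, List.mem_append]
          rcases hcls x hx with hxc | hxI
          · rcases hcls y hy with hyc | hyI
            · rcases (hE _).mp ((hc.2 x hxc y hyc).mp hadj) with h | h
              · rw [hEedg, List.mem_singleton] at h
                exact Or.inr (by rw [h]; exact List.mem_cons_self)
              · rcases (hQedges _).mp h with h | h
                · exact Or.inl (Or.inl (Or.inl h))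
                · rcases (hSedges _).mp h with h | h
                  · exact Or.inr (by rw [h]; simp)
                  · refine Or.inl (Or.inl (Or.inr ?_))
                    rw [Walk.edges_reverse, List.mem_reverse]
                    exact h
            · rcases hit x hxc y hyI hadj with ⟨rfl, rfl⟩ | ⟨rfl, rfl⟩ | ⟨rfl, rfl⟩ | ⟨rfl, rfl⟩
              · exact Or.inr (by simp)
              · exact Or.inr (by simp)
              · exact Or.inr (by simp)
              · exact Or.inr (by simp)
          · rcases hcls y hy with hyc | hyI
            · rcases hit y hyc x hxI hadj.symm with ⟨rfl, rfl⟩ | ⟨rfl, rfl⟩ | ⟨rfl, rfl⟩ | ⟨rfl, rfl⟩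
              · exact Or.inr (by simp [Sym2.eq_swap])
              · exact Or.inr (by simp [Sym2.eq_swap])
              · exact Or.inr (by simp [Sym2.eq_swap])
              · exact Or.inr (by simp [Sym2.eq_swap])
            · exact Or.inl (Or.inr (hIIedges x y hxI hyI hadj))
        · intro he
          rw [List.mem_append, List.mem_append] at he
          rcases he with (h | h) | h
          · rcases h with h | h
            · exact T.adj_of_mem_edges h
            · exact S₁.reverse.adj_of_mem_edges h
          · exact I.adj_of_mem_edges h
          · simp only [List.mem_cons, List.mem_singleton, List.not_mem_nil, or_false] at h
            rcases h with h | h | h | h | h | h <;> rw [Sym2.eq_iff] at h <;>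
              rcases h with ⟨rfl, rfl⟩ | ⟨rfl, rfl⟩
            · exact haa'
            · exact haa'.symm
            · exact ha'r
            · exact ha'r.symm
            · exact h₁
            · exact h₁.symm
            · exact hbb'
            · exact hbb'.symm
            · exact hb'r
            · exact hb'r.symm
            · exact h₂.symm
            · exact h₂
  rcases (hedges _).mp he₀ with h | h
  · exact key Q₁ Q₂ hp1 hp2 hinter hsupp hedges h
  · exact key Q₂ Q₁ hp2 hp1 (fun w hw1 hw2 => hinter w hw2 hw1)
      (fun z => (hsupp z).trans or_comm) (fun e => (hedges e).trans or_comm) h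

end CaseLemmas


section MainArg

variable {G : SimpleGraph V} [DecidableEq V] {v : V} {c : G.Walk v v}

lemma support_eq_of_len_zero {u w : V} {p : G.Walk u w} (h : p.length = 0) :
    p.support = [u] := by
  cases p with
  | nil => simp
  | cons _ _ => simp at h

lemma no_conn_min (hG : UniversallySignable G) (hc : IsInducedCycle G c)
    (hlen : 3 < c.length) (K : Conn G (· ∈ c.support))
    (hmin : ∀ K' : Conn G (· ∈ c.support), K.q.length ≤ K'.q.length) : False := by
  obtain ⟨a, b, ha, hb, hne, hnadj, q, hq, hlen2, hout⟩ := K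
  obtain ⟨r₁, rm, h₁, I, h₂, hqd⟩ := walk_decomp q hlen2
  subst hqd
  have hmin' : ∀ K' : Conn G (· ∈ c.support),
      (Walk.cons h₁ (I.concat h₂)).length ≤ K'.q.length := hmin
  have hqs : (Walk.cons h₁ (I.concat h₂)).support = a :: (I.support ++ [b]) := q_sup h₁ h₂ I
  have hqe : (Walk.cons h₁ (I.concat h₂)).edges = s(a, r₁) :: (I.edges ++ [s(rm, b)]) :=
    q_edg h₁ h₂ I
  obtain ⟨haI, hbI⟩ := q_endpoints_notmem hq.1
  have hIsubq : ∀ z ∈ I.support, z ∈ (Walk.cons h₁ (I.concat h₂)).support := by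
    intro z hz
    rw [hqs, List.mem_cons, List.mem_append]
    exact Or.inr (Or.inl hz)
  have hIout : ∀ z ∈ I.support, z ∉ c.support := by
    intro z hz
    exact hout z (hIsubq z hz) (fun h => haI (h ▸ hz)) (fun h => hbI (h ▸ hz))
  have hIind : IsInducedPath G I := by
    have e1 : (Walk.cons h₁ (I.concat h₂)) = (Walk.cons h₁ Walk.nil).append
        (I.append (Walk.cons h₂ Walk.nil)) := by
      rw [Walk.cons_nil_append, Walk.concat_eq_append]
    exact ((e1 ▸ hq).of_append_right').of_append_left'
  have hr₁ : r₁ ∈ I.support := I.start_mem_support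
  have hrm : rm ∈ I.support := I.end_mem_support
  have aHit : ∀ z ∈ I.support, G.Adj a z → z = r₁ := by
    intro z hz hadj
    have := (hq.2 a (by rw [hqs]; exact List.mem_cons_self) z (hIsubq z hz)).mp hadj
    rw [hqe, List.mem_cons, List.mem_append, List.mem_singleton] at this
    rcases this with h | h | h
    · rw [Sym2.eq_iff] at h
      rcases h with ⟨-, rfl⟩ | ⟨h1, -⟩
      · rfl
      · exact absurd (h1.symm ▸ hr₁) haI
    · exact absurd (Walk.fst_mem_support_of_mem_edges I h) haI
    · exfalso
      rw [Sym2.eq_iff] at h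
      rcases h with ⟨h1, -⟩ | ⟨h1, -⟩
      · exact haI (h1 ▸ hrm)
      · exact hne h1
  have bHit : ∀ z ∈ I.support, G.Adj b z → z = rm := by
    intro z hz hadj
    have hbq : b ∈ (Walk.cons h₁ (I.concat h₂)).support := by
      rw [hqs, List.mem_cons, List.mem_append, List.mem_singleton]
      exact Or.inr (Or.inr rfl)
    have := (hq.2 b hbq z (hIsubq z hz)).mp hadj
    rw [hqe, List.mem_cons, List.mem_append, List.mem_singleton] at this
    rcases this with h | h | h
    · exfalso
      rw [Sym2.eq_iff] at h
      rcases h with ⟨h1, -⟩ | ⟨h1, -⟩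
      · exact hne h1.symm
      · exact hbI (h1 ▸ hr₁)
    · exact absurd (Walk.fst_mem_support_of_mem_edges I h) hbI
    · rw [Sym2.eq_iff] at h
      rcases h with ⟨h1, -⟩ | ⟨-, rfl⟩
      · exact absurd (h1 ▸ hrm) hbI
      · rfl
  have shorten : ∀ d₁ d₂ : V, d₁ ∈ c.support → d₂ ∈ c.support → d₁ ≠ d₂ → ¬ G.Adj d₁ d₂ →
      (∃ z ∈ I.support, G.Adj d₁ z) → (∃ z ∈ I.support, G.Adj d₂ z) →
      ∀ z ∈ I.support, z ≠ r₁ → z ≠ rm → ¬ G.Adj d₁ z ∧ ¬ G.Adj d₂ z := by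
    intro d₁ d₂ hd₁ hd₂ hdne hdnadj hz₁ hz₂
    have disj : ∀ z ∈ I.support, ¬(G.Adj d₁ z ∧ G.Adj d₂ z) := by
      rintro z hz ⟨u1, u2⟩
      exact no_two_nonadj hG hc hlen (hIout z hz) hd₁ hd₂ hdne hdnadj u1.symm u2.symm
    obtain ⟨x, y, pre, mid, post, heqI, hor, honly⟩ :=
      exists_segment I (G.Adj d₁ ·) (G.Adj d₂ ·) disj hz₁ hz₂
    have hmind : IsInducedPath G mid := ((heqI ▸ hIind).of_append_right').of_append_left'
    have hmsub : ∀ z ∈ mid.support, z ∈ I.support := by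
      intro z hz
      rw [heqI]
      exact Walk.subset_support_append_right _ _ (Walk.subset_support_append_left _ _ hz)
    have hKex : ∃ K' : Conn G (· ∈ c.support), K'.q.length = mid.length + 2 := by
      rcases hor with ⟨u1, u2⟩ | ⟨u1, u2⟩
      · refine conn_build hd₁ hd₂ hdne hdnadj mid hmind
          (fun z hz => hIout z (hmsub z hz)) u1 u2.symm ?_ ?_
        · intro z hz hzx hA
          rcases honly z hz (Or.inl hA) with rfl | rfl
          · exact hzx rfl
          · exact disj z (hmsub z hz) ⟨hA, u2⟩
        · intro z hz hzy hB
          rcases honly z hz (Or.inr hB) with rfl | rfl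
          · exact disj z (hmsub z hz) ⟨u1, hB⟩
          · exact hzy rfl
      · refine conn_build hd₂ hd₁ hdne.symm (fun h => hdnadj h.symm) mid hmind
          (fun z hz => hIout z (hmsub z hz)) u1 u2.symm ?_ ?_
        · intro z hz hzx hA
          rcases honly z hz (Or.inr hA) with rfl | rfl
          · exact hzx rfl
          · exact disj z (hmsub z hz) ⟨u2, hA⟩
        · intro z hz hzy hB
          rcases honly z hz (Or.inl hB) with rfl | rfl
          · exact disj z (hmsub z hz) ⟨hB, u1⟩
          · exact hzy rfl
    obtain ⟨K', hK'len⟩ := hKex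
    have hminK := hmin' K'
    have hq_len : (Walk.cons h₁ (I.concat h₂)).length = I.length + 2 := by
      simp only [Walk.length_cons, Walk.length_concat]
    have hlenI : I.length = pre.length + (mid.length + post.length) := by
      have := congrArg Walk.length heqI
      rwa [Walk.length_append, Walk.length_append] at this
    have hpre0 : pre.length = 0 := by omega
    have hpost0 : post.length = 0 := by omega
    obtain rfl : r₁ = x := Walk.eq_of_length_eq_zero hpre0
    obtain rfl : y = rm := Walk.eq_of_length_eq_zero hpost0
    have hsupmid : ∀ z ∈ I.support, z ∈ mid.support := by
      intro z hz
      rw [heqI, Walk.support_append, Walk.support_append,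
        support_eq_of_len_zero hpre0, support_eq_of_len_zero hpost0] at hz
      rw [List.tail_cons, List.append_nil, List.singleton_append, List.mem_cons] at hz
      rcases hz with rfl | hz
      · exact mid.start_mem_support
      · exact List.tail_subset _ hz
    intro z hz hz1 hzm
    constructor
    · intro hA
      rcases honly z (hsupmid z hz) (Or.inl hA) with rfl | rfl
      · exact hz1 rfl
      · exact hzm rfl
    · intro hB
      rcases honly z (hsupmid z hz) (Or.inr hB) with rfl | rfl
      · exact hz1 rfl
      · exact hzm rfl
  rcases Nat.eq_zero_or_pos I.length with hI0 | hIlen1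
  · have hrr : r₁ = rm := Walk.eq_of_length_eq_zero hI0
    subst hrr
    exact no_two_nonadj hG hc hlen (hIout r₁ hr₁) ha hb hne hnadj h₁.symm h₂
  · have hr1m : r₁ ≠ rm := by
      intro h
      subst h
      have hnil : I = Walk.nil := Walk.isPath_iff_eq_nil.mp hIind.1
      rw [hnil] at hIlen1
      simp at hIlen1
    by_cases hD : ∃ d ∈ c.support, ∃ s ∈ I.support, s ≠ r₁ ∧ s ≠ rm ∧ G.Adj d s
    · obtain ⟨d, hd, s₀, hs₀, hs₀1, hs₀m, hds₀⟩ := hD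
      have hda : d ≠ a := fun h => hs₀1 (aHit s₀ hs₀ (h ▸ hds₀))
      have hdb : d ≠ b := fun h => hs₀m (bHit s₀ hs₀ (h ▸ hds₀))
      have dA : G.Adj a d := by
        by_contra hna
        exact ((shorten a d ha hd hda.symm hna ⟨r₁, hr₁, h₁⟩ ⟨s₀, hs₀, hds₀⟩)
          s₀ hs₀ hs₀1 hs₀m).2 hds₀
      have dB : G.Adj b d := by
        by_contra hna
        exact ((shorten b d hb hd hdb.symm hna ⟨rm, hrm, h₂.symm⟩ ⟨s₀, hs₀, hds₀⟩)
          s₀ hs₀ hs₀1 hs₀m).2 hds₀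
      have hit : ∀ u ∈ c.support, ∀ z ∈ I.support, G.Adj u z →
          u = d ∨ (u = a ∧ z = r₁) ∨ (u = b ∧ z = rm) := by
        intro e he z hz hadj
        by_cases hea : e = a
        · subst hea; exact Or.inr (Or.inl ⟨rfl, aHit z hz hadj⟩)
        by_cases heb : e = b
        · subst heb; exact Or.inr (Or.inr ⟨rfl, bHit z hz hadj⟩)
        by_cases hed : e = d
        · exact Or.inl hed
        exfalso
        have hde : ¬ G.Adj d e := by
          intro hde
          by_cases hz1 : z = r₁
          · have hae : G.Adj a e := by
              refine nbr_adj hG hc hlen (hIout z hz) ha he (fun h => hea h.symm) ?_ hadj.symm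
              rw [hz1]; exact h₁.symm
            exact no_triangle hc hlen ha hd he dA.ne hae.ne (fun h => hed h.symm) dA hae hde
          by_cases hzm : z = rm
          · have hbe : G.Adj b e := by
              refine nbr_adj hG hc hlen (hIout z hz) hb he (fun h => heb h.symm) ?_ hadj.symm
              rw [hzm]; exact h₂
            exact no_triangle hc hlen hb hd he dB.ne hbe.ne (fun h => hed h.symm) dB hbe hde
          · have hae : G.Adj a e := by
              by_contra hna
              exact ((shorten a e ha he (fun h => hea h.symm) hna ⟨r₁, hr₁, h₁⟩
                ⟨z, hz, hadj⟩) z hz hz1 hzm).2 hadj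
            exact no_triangle hc hlen ha hd he dA.ne hae.ne (fun h => hed h.symm) dA hae hde
        exact ((shorten d e hd he (fun h => hed h.symm) hde ⟨s₀, hs₀, hds₀⟩
          ⟨z, hz, hadj⟩) s₀ hs₀ hs₀1 hs₀m).1 hds₀
      exact wheel_case hG hc hlen ha hb hne hnadj hq hIout hIlen1 hd hda hdb dA.symm dB.symm
        hs₀ hds₀ hit
    · have hstrict : ∀ u ∈ c.support, ∀ z ∈ I.support, G.Adj u z → z = r₁ ∨ z = rm := by
        intro u hu z hz hadj
        by_contra hcon
        push_neg at hcon
        exact hD ⟨u, hu, z, hz, hcon.1, hcon.2, hadj⟩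
      by_cases hEa : ∃ e ∈ c.support, e ≠ a ∧ G.Adj e r₁
      · obtain ⟨a', ha', ha'a, ha'r₁⟩ := hEa
        have ha'b : a' ≠ b := by
          intro h
          subst h
          exact hr1m (bHit r₁ hr₁ ha'r₁)
        have haa' : G.Adj a a' :=
          nbr_adj hG hc hlen (hIout r₁ hr₁) ha ha' (fun h => ha'a h.symm) h₁.symm ha'r₁.symm
        have hEauniq : ∀ e ∈ c.support, G.Adj e r₁ → e = a ∨ e = a' := by
          intro e he hadj
          by_contra hcon
          push_neg at hcon
          exact no_three_nbrs hG hc hlen (hIout r₁ hr₁) ha ha' he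
            (fun h => ha'a h.symm) (fun h => hcon.1 h.symm) (fun h => hcon.2 h.symm)
            h₁.symm ha'r₁.symm hadj.symm
        by_cases hEb : ∃ e ∈ c.support, e ≠ b ∧ G.Adj e rm
        · obtain ⟨b', hb'm, hb'b, hb'rm⟩ := hEb
          have hb'a : b' ≠ a := by
            intro h
            subst h
            exact hr1m (aHit rm hrm hb'rm).symm
          have hbb' : G.Adj b b' :=
            nbr_adj hG hc hlen (hIout rm hrm) hb hb'm (fun h => hb'b h.symm) h₂ hb'rm.symm
          have hEbuniq : ∀ e ∈ c.support, G.Adj e rm → e = b ∨ e = b' := by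
            intro e he hadj
            by_contra hcon
            push_neg at hcon
            exact no_three_nbrs hG hc hlen (hIout rm hrm) hb hb'm he
              (fun h => hb'b h.symm) (fun h => hcon.1 h.symm) (fun h => hcon.2 h.symm)
              h₂ hb'rm.symm hadj.symm
          have hit4 : ∀ u ∈ c.support, ∀ z ∈ I.support, G.Adj u z →
              (u = a ∧ z = r₁) ∨ (u = a' ∧ z = r₁) ∨ (u = b ∧ z = rm) ∨
                (u = b' ∧ z = rm) := by
            intro u hu z hz hadj
            rcases hstrict u hu z hz hadj with rfl | rfl
            · rcases hEauniq u hu hadj with rfl | rfl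
              · exact Or.inl ⟨rfl, rfl⟩
              · exact Or.inr (Or.inl ⟨rfl, rfl⟩)
            · rcases hEbuniq u hu hadj with rfl | rfl
              · exact Or.inr (Or.inr (Or.inl ⟨rfl, rfl⟩))
              · exact Or.inr (Or.inr (Or.inr ⟨rfl, rfl⟩))
          by_cases hab : a' = b'
          · subst hab
            have hitW : ∀ u ∈ c.support, ∀ z ∈ I.support, G.Adj u z →
                u = a' ∨ (u = a ∧ z = r₁) ∨ (u = b ∧ z = rm) := by
              intro u hu z hz hadj
              rcases hit4 u hu z hz hadj with ⟨rfl, rfl⟩ | ⟨rfl, rfl⟩ | ⟨rfl, rfl⟩ | ⟨rfl, rfl⟩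
              · exact Or.inr (Or.inl ⟨rfl, rfl⟩)
              · exact Or.inl rfl
              · exact Or.inr (Or.inr ⟨rfl, rfl⟩)
              · exact Or.inl rfl
            exact wheel_case hG hc hlen ha hb hne hnadj hq hIout hIlen1 ha' ha'a ha'b
              haa'.symm hbb'.symm hr₁ ha'r₁ hitW
          · exact prism_case hG hc hlen ha hb hne hnadj hq hIout hIlen1 ha' ha'a ha'b
              haa' ha'r₁ hb'm hb'a hb'b hbb' hb'rm hab hit4
        · have hEbnone : ∀ e ∈ c.support, G.Adj e rm → e = b := by
            intro e he hadj
            by_contra hcon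
            exact hEb ⟨e, he, hcon, hadj⟩
          have hit3 : ∀ u ∈ c.support, ∀ z ∈ I.support, G.Adj u z →
              (u = a ∧ z = r₁) ∨ (u = a' ∧ z = r₁) ∨ (u = b ∧ z = rm) := by
            intro u hu z hz hadj
            rcases hstrict u hu z hz hadj with rfl | rfl
            · rcases hEauniq u hu hadj with rfl | rfl
              · exact Or.inl ⟨rfl, rfl⟩
              · exact Or.inr (Or.inl ⟨rfl, rfl⟩)
            · exact Or.inr (Or.inr ⟨hEbnone u hu hadj, rfl⟩)
          exact pyramid_case hG hc hlen ha hb hne hnadj hq hIout hIlen1 ha' ha'a ha'b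
            haa' ha'r₁ hit3
      · have hEanone : ∀ e ∈ c.support, G.Adj e r₁ → e = a := by
          intro e he hadj
          by_contra hcon
          exact hEa ⟨e, he, hcon, hadj⟩
        by_cases hEb : ∃ e ∈ c.support, e ≠ b ∧ G.Adj e rm
        · -- symmetric pyramid
          obtain ⟨b', hb'm, hb'b, hb'rm⟩ := hEb
          have hb'a : b' ≠ a := by
            intro h
            subst h
            exact hr1m (aHit rm hrm hb'rm).symm
          have hbb' : G.Adj b b' :=
            nbr_adj hG hc hlen (hIout rm hrm) hb hb'm (fun h => hb'b h.symm) h₂ hb'rm.symm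
          have hEbuniq : ∀ e ∈ c.support, G.Adj e rm → e = b ∨ e = b' := by
            intro e he hadj
            by_contra hcon
            push_neg at hcon
            exact no_three_nbrs hG hc hlen (hIout rm hrm) hb hb'm he
              (fun h => hb'b h.symm) (fun h => hcon.1 h.symm) (fun h => hcon.2 h.symm)
              h₂ hb'rm.symm hadj.symm
          have hqrev : (Walk.cons h₁ (I.concat h₂)).reverse
              = Walk.cons h₂.symm (I.reverse.concat h₁.symm) := by
            rw [Walk.reverse_cons, Walk.reverse_concat, ← Walk.concat_eq_append,
              Walk.concat_cons]
          have hq' : IsInducedPath G (Walk.cons h₂.symm (I.reverse.concat h₁.symm)) := by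
            rw [← hqrev]
            exact hq.reverse'
          have hIout' : ∀ z ∈ I.reverse.support, z ∉ c.support := by
            intro z hz
            rw [Walk.support_reverse, List.mem_reverse] at hz
            exact hIout z hz
          have hit3 : ∀ u ∈ c.support, ∀ z ∈ I.reverse.support, G.Adj u z →
              (u = b ∧ z = rm) ∨ (u = b' ∧ z = rm) ∨ (u = a ∧ z = r₁) := by
            intro u hu z hz hadj
            rw [Walk.support_reverse, List.mem_reverse] at hz
            rcases hstrict u hu z hz hadj with rfl | rfl
            · exact Or.inr (Or.inr ⟨hEanone u hu hadj, rfl⟩)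
            · rcases hEbuniq u hu hadj with rfl | rfl
              · exact Or.inl ⟨rfl, rfl⟩
              · exact Or.inr (Or.inl ⟨rfl, rfl⟩)
          exact pyramid_case hG hc hlen hb ha hne.symm (fun h => hnadj h.symm) hq'
            hIout' (by rw [Walk.length_reverse]; exact hIlen1) hb'm hb'b hb'a
            hbb' hb'rm hit3
        · have hEbnone : ∀ e ∈ c.support, G.Adj e rm → e = b := by
            intro e he hadj
            by_contra hcon
            exact hEb ⟨e, he, hcon, hadj⟩
          have hit2 : ∀ u ∈ c.support, ∀ z ∈ I.support, G.Adj u z →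
              (u = a ∧ z = r₁) ∨ (u = b ∧ z = rm) := by
            intro u hu z hz hadj
            rcases hstrict u hu z hz hadj with rfl | rfl
            · exact Or.inl ⟨hEanone u hu hadj, rfl⟩
            · exact Or.inr ⟨hEbnone u hu hadj, rfl⟩
          exact theta_case hG hc hlen ha hb hne hnadj hq hIout hit2

lemma no_conn (hG : UniversallySignable G) (hc : IsInducedCycle G c)
    (hlen : 3 < c.length) : ¬ Nonempty (Conn G (· ∈ c.support)) := by
  rintro ⟨K0⟩
  have hS : {n | ∃ K : Conn G (· ∈ c.support), K.q.length = n}.Nonempty :=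
    ⟨K0.q.length, K0, rfl⟩
  obtain ⟨K, hK⟩ := Nat.sInf_mem hS
  refine no_conn_min hG hc hlen K ?_
  intro K'
  rw [hK]
  exact Nat.sInf_le ⟨K', rfl⟩

end MainArg


theorem stmt4 {V : Type} [Fintype V] (G : SimpleGraph V) (hG : UniversallySignable G)
    (v : V) (c : G.Walk v v) (hc : IsInducedCycle G c) (hlen : 3 < c.length)
    (u w : V) (hu : u ∈ c.support) (hw : w ∈ c.support) (hne : u ≠ w)
    (hadj : ¬ G.Adj u w) (p : G.Walk u w) (hp : IsInducedPath G p) :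
    ∀ x ∈ p.support, x ∈ c.support := by
  classical
  intro x hx
  by_contra hxC
  exact no_conn hG hc hlen (conn_exists p hp hu hw ⟨x, hx, hxC⟩)

end Paper
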